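/- arXiv:2006.03989 — 4 statements merged into one kernel-verified Lean document; each statement's English description precedes it below -/
import Mathlib

section
/- (Lemma 6(ii), core.) Let s* ≤ 1 with s* ≠ 0, let a < b be real numbers and 0 < u < v < 1, and set γ₁ = (v^{s*} − u^{s*})/(s*(b − a)) and γ₂ = ((1−u)^{s*} − (1−v)^{s*})/(s*(b − a)). If G is a non-degenerate bi-s*-concave distribution function with G(a) ≤ u and G(b) ≥ v, then: for all x ≤ a, G(x) ≤ (max{u^{s*} + s* γ₁ (x − a), 0})^{1/s*}, and for all x ≥ b, 1 − G(x) ≤ (max{(1−v)^{s*} − s* γ₂ (x − b), 0})^{1/s*} (here, for s* > 0, max{t,0}^{1/s*} is 0 when t ≤ 0; for s* < 0 the expressions inside the maxima are automatically positive). -/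
open Set MeasureTheory Filter
open scoped NNReal ENNReal

/-- A (cumulative) distribution function on `ℝ`: nondecreasing, `[0,1]`-valued,
right-continuous, with limit `0` at `-∞` and `1` at `+∞`. -/
def IsDistFun (F : ℝ → ℝ) : Prop :=
  Monotone F ∧ (∀ x, 0 ≤ F x ∧ F x ≤ 1) ∧
  (∀ x, ContinuousWithinAt F (Ici x) x) ∧
  Tendsto F atBot (nhds 0) ∧ Tendsto F atTop (nhds 1)

/-- `F` is non-degenerate: it takes a value strictly between 0 and 1. -/
def NonDeg (F : ℝ → ℝ) : Prop := ∃ x, 0 < F x ∧ F x < 1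

/-- `J(F) = {x : 0 < F x < 1}`. -/
def JSet (F : ℝ → ℝ) : Set ℝ := {x | 0 < F x ∧ F x < 1}

/-- `F` is bi-`s*`-concave: `F` is continuous on `ℝ` and, on `J(F)`,
for `s* < 0` both `F ^ s*` and `(1 - F) ^ s*` are convex; for `s* = 0` both
`log F` and `log (1 - F)` are concave; for `s* > 0` both `F ^ s*` and
`(1 - F) ^ s*` are concave. -/
def IsBiSStarConcave (s : ℝ) (F : ℝ → ℝ) : Prop :=
  Continuous F ∧
  (s < 0 → ConvexOn ℝ (JSet F) (fun x => F x ^ s) ∧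
    ConvexOn ℝ (JSet F) (fun x => (1 - F x) ^ s)) ∧
  (s = 0 → ConcaveOn ℝ (JSet F) (fun x => Real.log (F x)) ∧
    ConcaveOn ℝ (JSet F) (fun x => Real.log (1 - F x))) ∧
  (0 < s → ConcaveOn ℝ (JSet F) (fun x => F x ^ s) ∧
    ConcaveOn ℝ (JSet F) (fun x => (1 - F x) ^ s))

lemma chord_left_concave {S : Set ℝ} {φ : ℝ → ℝ} (hφ : ConcaveOn ℝ S φ)
    {x p q : ℝ} (hx : x ∈ S) (hq : q ∈ S) (hxp : x < p) (hpq : p < q) :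
    φ x ≤ φ p + (φ q - φ p) / (q - p) * (x - p) := by
  have h := hφ.slope_anti_adjacent hx hq hxp hpq
  have hpx : (0:ℝ) < p - x := by linarith
  rw [div_le_div_iff₀ (by linarith) hpx] at h
  rw [div_mul_eq_mul_div, ← sub_le_iff_le_add', le_div_iff₀ (by linarith : (0:ℝ) < q - p)]
  nlinarith [h]

lemma chord_left_convex {S : Set ℝ} {φ : ℝ → ℝ} (hφ : ConvexOn ℝ S φ)
    {x p q : ℝ} (hx : x ∈ S) (hq : q ∈ S) (hxp : x < p) (hpq : p < q) :
    φ p + (φ q - φ p) / (q - p) * (x - p) ≤ φ x := by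
  have h := chord_left_concave hφ.neg hx hq hxp hpq
  simp only [Pi.neg_apply] at h
  have hne : (0:ℝ) < q - p := by linarith
  have e : (-φ q - -φ p) / (q - p) = -((φ q - φ p)/(q-p)) := by ring
  rw [e] at h
  linarith

lemma chord_right_concave {S : Set ℝ} {φ : ℝ → ℝ} (hφ : ConcaveOn ℝ S φ)
    {x p q : ℝ} (hp : p ∈ S) (hx : x ∈ S) (hpq : p < q) (hqx : q < x) :
    φ x ≤ φ q + (φ q - φ p) / (q - p) * (x - q) := by
  have h := hφ.slope_anti_adjacent hp hx hpq hqx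
  have hxq : (0:ℝ) < x - q := by linarith
  rw [div_le_div_iff₀ hxq (by linarith)] at h
  rw [div_mul_eq_mul_div, ← sub_le_iff_le_add', le_div_iff₀ (by linarith : (0:ℝ) < q - p)]
  nlinarith [h]

lemma chord_right_convex {S : Set ℝ} {φ : ℝ → ℝ} (hφ : ConvexOn ℝ S φ)
    {x p q : ℝ} (hp : p ∈ S) (hx : x ∈ S) (hpq : p < q) (hqx : q < x) :
    φ q + (φ q - φ p) / (q - p) * (x - q) ≤ φ x := by
  have h := chord_right_concave hφ.neg hp hx hpq hqx
  simp only [Pi.neg_apply] at h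
  have e : (-φ q - -φ p) / (q - p) = -((φ q - φ p)/(q-p)) := by ring
  rw [e] at h
  linarith

/-- Lemma 6(ii), core: if `G` is a non-degenerate bi-`s*`-concave distribution
function with `G(a) ≤ u` and `G(b) ≥ v` (where `a < b`, `0 < u < v < 1`), then with
`γ₁ = (v^{s*} - u^{s*})/(s*(b - a))` and `γ₂ = ((1-u)^{s*} - (1-v)^{s*})/(s*(b - a))`:
`G(x) ≤ (max{u^{s*} + s* γ₁ (x - a), 0})^{1/s*}` for `x ≤ a`, and
`1 - G(x) ≤ (max{(1-v)^{s*} - s* γ₂ (x - b), 0})^{1/s*}` for `x ≥ b`. -/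
theorem tail_bounds_of_biSStarConcave_band
    (s : ℝ) (hs : s ≤ 1) (hs0 : s ≠ 0)
    (a b u v : ℝ) (hab : a < b) (hu : 0 < u) (huv : u < v) (hv : v < 1)
    (G : ℝ → ℝ) (hG : IsDistFun G) (hnd : NonDeg G)
    (hbi : IsBiSStarConcave s G)
    (hGa : G a ≤ u) (hGb : v ≤ G b) :
    (∀ x ≤ a,
      G x ≤ (max (u ^ s + s * ((v ^ s - u ^ s) / (s * (b - a))) * (x - a)) 0) ^ (1 / s)) ∧
    (∀ x ≥ b,
      1 - G x ≤
        (max ((1 - v) ^ s - s * (((1 - u) ^ s - (1 - v) ^ s) / (s * (b - a))) * (x - b)) 0)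
          ^ (1 / s)) := by
  obtain ⟨hGmono, hG01, -, -, -⟩ := hG
  have hcont : Continuous G := hbi.1
  have hba : (0:ℝ) < b - a := by linarith
  have hIVT := intermediate_value_Icc hab.le hcont.continuousOn
  obtain ⟨d, hdmem, hGd⟩ := hIVT ⟨hGa.trans huv.le, hGb⟩
  obtain ⟨c, hcmem, hGc⟩ := hIVT ⟨hGa, huv.le.trans hGb⟩
  have had : a < d := by
    by_contra h
    push_neg at h
    have := hGmono h
    rw [hGd] at this
    linarith
  have hcb : c < b := by
    by_contra h
    push_neg at h
    have := hGmono h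
    rw [hGc] at this
    linarith
  constructor
  · -- left tail
    intro x hxa
    have hrw : s * ((v ^ s - u ^ s) / (s * (b - a))) = (v ^ s - u ^ s) / (b - a) := by
      field_simp
    rw [hrw]
    by_cases hGx : 0 < G x
    · have hGxlt1 : G x < 1 := lt_of_le_of_lt (le_trans (hGmono hxa) hGa) (huv.trans hv)
      have hxJ : x ∈ JSet G := ⟨hGx, hGxlt1⟩
      have hGapos : 0 < G a := lt_of_lt_of_le hGx (hGmono hxa)
      have haJ : a ∈ JSet G := ⟨hGapos, lt_of_le_of_lt hGa (huv.trans hv)⟩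
      have hdJ : d ∈ JSet G := ⟨hGd ▸ (hu.trans huv), hGd ▸ hv⟩
      rcases eq_or_lt_of_le hxa with heq | hxa'
      · subst heq
        simp only [sub_self, mul_zero, add_zero]
        have hus : (0:ℝ) < u ^ s := Real.rpow_pos_of_pos hu s
        rw [max_eq_left hus.le, one_div, Real.rpow_rpow_inv hu.le hs0]
        exact hGa
      · rcases hs0.lt_or_gt with hneg | hpos
        · -- s < 0, convex
          have hconv := (hbi.2.1 hneg).1
          have key : G a ^ s + (G d ^ s - G a ^ s) / (d - a) * (x - a) ≤ G x ^ s :=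
            chord_left_convex hconv hxJ hdJ hxa' had
          rw [hGd] at key
          have hGas : u ^ s ≤ G a ^ s := (Real.rpow_le_rpow_iff_of_neg hu hGapos hneg).mpr hGa
          have hvsus : v ^ s < u ^ s := Real.rpow_lt_rpow_of_neg hu huv hneg
          have hslope : (v ^ s - G a ^ s) / (d - a) ≤ (v ^ s - u ^ s) / (b - a) := by
            have h1 : (u ^ s - v ^ s) / (b - a) ≤ (G a ^ s - v ^ s) / (d - a) :=
              div_le_div₀ (by linarith) (by linarith) (by linarith) (by linarith [hdmem.2])
            have e1 : (v ^ s - G a ^ s) / (d - a) = -((G a ^ s - v ^ s) / (d - a)) := by ring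
            have e2 : (v ^ s - u ^ s) / (b - a) = -((u ^ s - v ^ s) / (b - a)) := by ring
            rw [e1, e2]
            linarith
          have hmul : (v ^ s - u ^ s) / (b - a) * (x - a) ≤ (v ^ s - G a ^ s) / (d - a) * (x - a) :=
            mul_le_mul_of_nonpos_right hslope (by linarith)
          have h2 : u ^ s + (v ^ s - u ^ s) / (b - a) * (x - a) ≤ G x ^ s := by linarith
          have hinpos : 0 < u ^ s + (v ^ s - u ^ s) / (b - a) * (x - a) := by
            have hus : (0:ℝ) < u ^ s := Real.rpow_pos_of_pos hu s
            have hm : (v ^ s - u ^ s) / (b - a) ≤ 0 :=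
              div_nonpos_of_nonpos_of_nonneg (by linarith) (by linarith)
            nlinarith
          rw [max_eq_left hinpos.le]
          have hGxs : 0 < G x ^ s := Real.rpow_pos_of_pos hGx s
          calc G x = (G x ^ s) ^ (1 / s) := by
                rw [one_div, Real.rpow_rpow_inv hGx.le hs0]
            _ ≤ _ := (Real.rpow_le_rpow_iff_of_neg hGxs hinpos (by
                  rw [one_div]
                  exact inv_lt_zero.mpr hneg)).mpr h2
        · -- 0 < s, concave
          have hconc := (hbi.2.2.2 hpos).1
          have key : G x ^ s ≤ G a ^ s + (G d ^ s - G a ^ s) / (d - a) * (x - a) :=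
            chord_left_concave hconc hxJ hdJ hxa' had
          rw [hGd] at key
          have hGas : G a ^ s ≤ u ^ s := Real.rpow_le_rpow hGapos.le hGa hpos.le
          have husvs : u ^ s ≤ v ^ s := Real.rpow_le_rpow hu.le huv.le hpos.le
          have hslope : (v ^ s - u ^ s) / (b - a) ≤ (v ^ s - G a ^ s) / (d - a) :=
            div_le_div₀ (by linarith) (by linarith) (by linarith) (by linarith [hdmem.2])
          have hmul : (v ^ s - G a ^ s) / (d - a) * (x - a) ≤ (v ^ s - u ^ s) / (b - a) * (x - a) :=
            mul_le_mul_of_nonpos_right hslope (by linarith)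
          have h2 : G x ^ s ≤ u ^ s + (v ^ s - u ^ s) / (b - a) * (x - a) := by linarith
          have h3 : G x ^ s ≤ max (u ^ s + (v ^ s - u ^ s) / (b - a) * (x - a)) 0 :=
            le_trans h2 (le_max_left _ _)
          calc G x = (G x ^ s) ^ (1 / s) := by
                rw [one_div, Real.rpow_rpow_inv hGx.le hs0]
            _ ≤ _ := Real.rpow_le_rpow (Real.rpow_nonneg hGx.le s) h3
                (one_div_nonneg.mpr hpos.le)
    · push_neg at hGx
      have hGx0 : G x = 0 := le_antisymm hGx (hG01 x).1
      rw [hGx0]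
      exact Real.rpow_nonneg (le_max_right _ _) _
  · -- right tail
    intro x hxb
    have hrw : s * (((1 - u) ^ s - (1 - v) ^ s) / (s * (b - a)))
        = ((1 - u) ^ s - (1 - v) ^ s) / (b - a) := by
      field_simp
    rw [hrw]
    by_cases hHx : G x < 1
    · have hGxpos : 0 < G x := (hu.trans huv).trans_le (hGb.trans (hGmono hxb))
      have hxJ : x ∈ JSet G := ⟨hGxpos, hHx⟩
      have hGblt1 : G b < 1 := lt_of_le_of_lt (hGmono hxb) hHx
      have hbJ : b ∈ JSet G := ⟨(hu.trans huv).trans_le hGb, hGblt1⟩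
      have hcJ : c ∈ JSet G := ⟨hGc ▸ hu, hGc ▸ (huv.trans hv)⟩
      have hHb : 1 - G b ≤ 1 - v := by linarith
      have hHbpos : (0:ℝ) < 1 - G b := by linarith
      have h1v : (0:ℝ) < 1 - v := by linarith
      have h1u : (0:ℝ) < 1 - u := by linarith
      rcases eq_or_lt_of_le hxb with heq | hbx
      · rw [← heq]
        simp only [sub_self, mul_zero, sub_zero]
        have hvs : (0:ℝ) < (1 - v) ^ s := Real.rpow_pos_of_pos h1v s
        rw [max_eq_left hvs.le, one_div, Real.rpow_rpow_inv h1v.le hs0]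
        linarith
      · rcases hs0.lt_or_gt with hneg | hpos
        · -- s < 0, convex
          have hconv := (hbi.2.1 hneg).2
          have key : (1 - G b) ^ s + ((1 - G b) ^ s - (1 - G c) ^ s) / (b - c) * (x - b)
              ≤ (1 - G x) ^ s := chord_right_convex hconv hcJ hxJ hcb hbx
          rw [hGc] at key
          have hBb : (1 - v) ^ s ≤ (1 - G b) ^ s :=
            (Real.rpow_le_rpow_iff_of_neg h1v hHbpos hneg).mpr hHb
          have hUV : (1 - u) ^ s < (1 - v) ^ s :=
            Real.rpow_lt_rpow_of_neg h1v (by linarith) hneg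
          have hslope : ((1 - v) ^ s - (1 - u) ^ s) / (b - a)
              ≤ ((1 - G b) ^ s - (1 - u) ^ s) / (b - c) :=
            div_le_div₀ (by linarith) (by linarith) (by linarith) (by linarith [hcmem.1])
          have hmul : ((1 - v) ^ s - (1 - u) ^ s) / (b - a) * (x - b)
              ≤ ((1 - G b) ^ s - (1 - u) ^ s) / (b - c) * (x - b) :=
            mul_le_mul_of_nonneg_right hslope (by linarith)
          have e : ((1 - v) ^ s - (1 - u) ^ s) / (b - a) * (x - b)
              = -(((1 - u) ^ s - (1 - v) ^ s) / (b - a) * (x - b)) := by ring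
          have h2 : (1 - v) ^ s - ((1 - u) ^ s - (1 - v) ^ s) / (b - a) * (x - b)
              ≤ (1 - G x) ^ s := by
            rw [e] at hmul
            linarith
          have hinpos : 0 < (1 - v) ^ s - ((1 - u) ^ s - (1 - v) ^ s) / (b - a) * (x - b) := by
            have hvs : (0:ℝ) < (1 - v) ^ s := Real.rpow_pos_of_pos h1v s
            have hm : ((1 - u) ^ s - (1 - v) ^ s) / (b - a) ≤ 0 :=
              div_nonpos_of_nonpos_of_nonneg (by linarith) (by linarith)
            nlinarith
          rw [max_eq_left hinpos.le]
          have hHxpos : (0:ℝ) < 1 - G x := by linarith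
          have hHxs : 0 < (1 - G x) ^ s := Real.rpow_pos_of_pos hHxpos s
          calc 1 - G x = ((1 - G x) ^ s) ^ (1 / s) := by
                rw [one_div, Real.rpow_rpow_inv hHxpos.le hs0]
            _ ≤ _ := (Real.rpow_le_rpow_iff_of_neg hHxs hinpos (by
                  rw [one_div]
                  exact inv_lt_zero.mpr hneg)).mpr h2
        · -- 0 < s, concave
          have hconc := (hbi.2.2.2 hpos).2
          have key : (1 - G x) ^ s
              ≤ (1 - G b) ^ s + ((1 - G b) ^ s - (1 - G c) ^ s) / (b - c) * (x - b) :=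
            chord_right_concave hconc hcJ hxJ hcb hbx
          rw [hGc] at key
          have hBb : (1 - G b) ^ s ≤ (1 - v) ^ s := Real.rpow_le_rpow hHbpos.le hHb hpos.le
          have hUV : (1 - v) ^ s ≤ (1 - u) ^ s :=
            Real.rpow_le_rpow h1v.le (by linarith) hpos.le
          have hslope : ((1 - G b) ^ s - (1 - u) ^ s) / (b - c)
              ≤ ((1 - v) ^ s - (1 - u) ^ s) / (b - a) := by
            have h1 : ((1 - u) ^ s - (1 - v) ^ s) / (b - a)
                ≤ ((1 - u) ^ s - (1 - G b) ^ s) / (b - c) :=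
              div_le_div₀ (by linarith) (by linarith) (by linarith) (by linarith [hcmem.1])
            have e1 : ((1 - G b) ^ s - (1 - u) ^ s) / (b - c)
                = -(((1 - u) ^ s - (1 - G b) ^ s) / (b - c)) := by ring
            have e2 : ((1 - v) ^ s - (1 - u) ^ s) / (b - a)
                = -(((1 - u) ^ s - (1 - v) ^ s) / (b - a)) := by ring
            rw [e1, e2]
            linarith
          have hmul : ((1 - G b) ^ s - (1 - u) ^ s) / (b - c) * (x - b)
              ≤ ((1 - v) ^ s - (1 - u) ^ s) / (b - a) * (x - b) :=
            mul_le_mul_of_nonneg_right hslope (by linarith)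
          have e : ((1 - v) ^ s - (1 - u) ^ s) / (b - a) * (x - b)
              = -(((1 - u) ^ s - (1 - v) ^ s) / (b - a) * (x - b)) := by ring
          have h2 : (1 - G x) ^ s
              ≤ (1 - v) ^ s - ((1 - u) ^ s - (1 - v) ^ s) / (b - a) * (x - b) := by
            rw [e] at hmul
            linarith
          have h3 : (1 - G x) ^ s
              ≤ max ((1 - v) ^ s - ((1 - u) ^ s - (1 - v) ^ s) / (b - a) * (x - b)) 0 :=
            le_trans h2 (le_max_left _ _)
          have hHxnn : (0:ℝ) ≤ 1 - G x := by linarith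
          calc 1 - G x = ((1 - G x) ^ s) ^ (1 / s) := by
                rw [one_div, Real.rpow_rpow_inv hHxnn hs0]
            _ ≤ _ := Real.rpow_le_rpow (Real.rpow_nonneg hHxnn s) h3
                (one_div_nonneg.mpr hpos.le)
    · push_neg at hHx
      exact le_trans (by linarith) (Real.rpow_nonneg (le_max_right _ _) _)
end

section
/- (Theorem 7(i), deterministic core.) Let s* ≤ 1 and let F be a non-degenerate continuous distribution function that is NOT bi-s*-concave. Let (L_n) and (U_n) be sequences of nondecreasing functions ℝ → [0,1] such that for every x ∈ ℝ, L_n(x) → F(x) and U_n(x) → F(x) as n → ∞. Then there exists N such that for all n ≥ N there is no bi-s*-concave distribution function G with L_n(x) ≤ G(x) ≤ U_n(x) for all x ∈ ℝ. -/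
open Set MeasureTheory Filter
open scoped NNReal ENNReal

section Aux

open Set Filter

lemma aux_convex_JSet (F : ℝ → ℝ) (hmono : Monotone F) : Convex ℝ (JSet F) := by
  rw [convex_iff_ordConnected]
  exact ⟨fun x hx y hy z hz =>
    ⟨lt_of_lt_of_le hx.1 (hmono hz.1), lt_of_le_of_lt (hmono hz.2) hy.2⟩⟩

lemma aux_convexOn_limit (F : ℝ → ℝ) (hmono : Monotone F)
    (G : ℕ → ℝ → ℝ)
    (hG : ∀ x, Tendsto (fun n => G n x) atTop (nhds (F x)))
    (f : ℝ → ℝ) (hf : ∀ t ∈ Ioo (0:ℝ) 1, ContinuousAt f t)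
    (hconv : ∀ n, ConvexOn ℝ (JSet (G n)) (fun x => f (G n x))) :
    ConvexOn ℝ (JSet F) (fun x => f (F x)) := by
  have hJ : Convex ℝ (JSet F) := aux_convex_JSet F hmono
  refine ⟨hJ, fun x hx y hy a b ha hb hab => ?_⟩
  have hz : a • x + b • y ∈ JSet F := hJ hx hy ha hb hab
  have tx : Tendsto (fun n => f (G n x)) atTop (nhds (f (F x))) :=
    (hf (F x) ⟨hx.1, hx.2⟩).tendsto.comp (hG x)
  have ty : Tendsto (fun n => f (G n y)) atTop (nhds (f (F y))) :=
    (hf (F y) ⟨hy.1, hy.2⟩).tendsto.comp (hG y)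
  have tz : Tendsto (fun n => f (G n (a • x + b • y))) atTop
      (nhds (f (F (a • x + b • y)))) :=
    (hf (F (a • x + b • y)) ⟨hz.1, hz.2⟩).tendsto.comp (hG _)
  have hEx : ∀ᶠ n in atTop, G n x ∈ Ioo (0:ℝ) 1 :=
    (hG x).eventually (Ioo_mem_nhds hx.1 hx.2)
  have hEy : ∀ᶠ n in atTop, G n y ∈ Ioo (0:ℝ) 1 :=
    (hG y).eventually (Ioo_mem_nhds hy.1 hy.2)
  have hle : ∀ᶠ n in atTop,
      f (G n (a • x + b • y)) ≤ a * f (G n x) + b * f (G n y) := by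
    filter_upwards [hEx, hEy] with n hnx hny
    have := (hconv n).2 (x := x) (y := y) ⟨hnx.1, hnx.2⟩ ⟨hny.1, hny.2⟩ ha hb hab
    simpa [smul_eq_mul] using this
  have := le_of_tendsto_of_tendsto tz ((tx.const_mul a).add (ty.const_mul b)) hle
  simpa [smul_eq_mul] using this

lemma aux_concaveOn_limit (F : ℝ → ℝ) (hmono : Monotone F)
    (G : ℕ → ℝ → ℝ)
    (hG : ∀ x, Tendsto (fun n => G n x) atTop (nhds (F x)))
    (f : ℝ → ℝ) (hf : ∀ t ∈ Ioo (0:ℝ) 1, ContinuousAt f t)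
    (hconc : ∀ n, ConcaveOn ℝ (JSet (G n)) (fun x => f (G n x))) :
    ConcaveOn ℝ (JSet F) (fun x => f (F x)) := by
  rw [← neg_convexOn_iff]
  have := aux_convexOn_limit F hmono G hG (fun t => -(f t))
    (fun t ht => (hf t ht).neg)
    (fun n => by simpa [Pi.neg_def] using (neg_convexOn_iff (𝕜 := ℝ)).mpr (hconc n))
  simpa [Pi.neg_def] using this

end Aux

/-- Theorem 7(i), deterministic core: if the continuous non-degenerate
distribution function `F` is not bi-`s*`-concave and `L n`, `U n` are nondecreasing
`[0,1]`-valued functions converging pointwise to `F`, then eventually no bi-`s*`-concave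
distribution function fits between `L n` and `U n`. -/
theorem eventually_no_biSStarConcave_fits
    (s : ℝ) (hs : s ≤ 1)
    (F : ℝ → ℝ) (hF : IsDistFun F) (hcont : Continuous F) (hnd : NonDeg F)
    (hnotbi : ¬ IsBiSStarConcave s F)
    (L U : ℕ → ℝ → ℝ)
    (hLmono : ∀ n, Monotone (L n)) (hUmono : ∀ n, Monotone (U n))
    (hL01 : ∀ n x, 0 ≤ L n x ∧ L n x ≤ 1) (hU01 : ∀ n x, 0 ≤ U n x ∧ U n x ≤ 1)
    (hLconv : ∀ x, Tendsto (fun n => L n x) atTop (nhds (F x)))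
    (hUconv : ∀ x, Tendsto (fun n => U n x) atTop (nhds (F x))) :
    ∃ N : ℕ, ∀ n ≥ N,
      ¬ ∃ G : ℝ → ℝ, IsDistFun G ∧ IsBiSStarConcave s G ∧
        ∀ x, L n x ≤ G x ∧ G x ≤ U n x := by
  
  by_contra h
  push_neg at h
  choose phi hge G hGdist hGbi hGfit using h
  have hphi : Tendsto phi atTop atTop := tendsto_atTop_mono hge tendsto_id
  have hG : ∀ x, Tendsto (fun N => G N x) atTop (nhds (F x)) := fun x =>
    tendsto_of_tendsto_of_tendsto_of_le_of_le ((hLconv x).comp hphi)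
      ((hUconv x).comp hphi) (fun N => (hGfit N x).1) (fun N => (hGfit N x).2)
  refine hnotbi ⟨hcont, fun hslt => ?_, fun hs0 => ?_, fun hspos => ?_⟩
  · constructor
    · exact aux_convexOn_limit F hF.1 G hG (fun t => t ^ s)
        (fun t ht => Real.continuousAt_rpow_const t s (Or.inl (ne_of_gt ht.1)))
        (fun n => ((hGbi n).2.1 hslt).1)
    · exact aux_convexOn_limit F hF.1 G hG (fun t => (1 - t) ^ s)
        (fun t ht => ContinuousAt.rpow_const (continuousAt_const.sub continuousAt_id)
          (Or.inl (by simpa using sub_ne_zero.mpr (ne_of_gt ht.2))))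
        (fun n => ((hGbi n).2.1 hslt).2)
  · constructor
    · exact aux_concaveOn_limit F hF.1 G hG (fun t => Real.log t)
        (fun t ht => Real.continuousAt_log (ne_of_gt ht.1))
        (fun n => ((hGbi n).2.2.1 hs0).1)
    · exact aux_concaveOn_limit F hF.1 G hG (fun t => Real.log (1 - t))
        (fun t ht => (Real.continuousAt_log (by simpa using sub_ne_zero.mpr (ne_of_gt ht.2))).comp
          (continuousAt_const.sub continuousAt_id))
        (fun n => ((hGbi n).2.2.1 hs0).2)
  · constructor
    · exact aux_concaveOn_limit F hF.1 G hG (fun t => t ^ s)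
        (fun t ht => Real.continuousAt_rpow_const t s (Or.inl (ne_of_gt ht.1)))
        (fun n => ((hGbi n).2.2.2 hspos).1)
    · exact aux_concaveOn_limit F hF.1 G hG (fun t => (1 - t) ^ s)
        (fun t ht => ContinuousAt.rpow_const (continuousAt_const.sub continuousAt_id)
          (Or.inl (by simpa using sub_ne_zero.mpr (ne_of_gt ht.2))))
        (fun n => ((hGbi n).2.2.2 hspos).2)
end

section
/- (Theorem 7(ii), derivative consistency, deterministic core.) Let s* ≤ 1 with s* ≠ 0, let F be a non-degenerate bi-s*-concave distribution function, and let K be a compact subinterval of J(F). Let (L_n) and (U_n) be sequences of nondecreasing functions ℝ → [0,1] such that for every x ∈ ℝ, L_n(x) → F(x) and U_n(x) → F(x) as n → ∞. Then for every ε > 0 there exists N such that for all n ≥ N and every bi-s*-concave distribution function G with L_n ≤ G ≤ U_n pointwise on ℝ, one has K ⊆ J(G) and sup_{x ∈ K} | (G^{s*})′(x) − (F^{s*})′(x) | ≤ ε, where (G^{s*})′(x) = s* G(x)^{s*−1} G′(x) and (F^{s*})′(x) = s* F(x)^{s*−1} F′(x) (these derivatives exist on K by the characterization theorem). -/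
open Set MeasureTheory Filter
open scoped NNReal ENNReal

open scoped Topology

section AuxLemmas

/-- One-sided derivatives of a convex function exist at interior points. -/
lemma convexOn_oneSided {S : Set ℝ} {f : ℝ → ℝ} {x : ℝ}
    (hf : ConvexOn ℝ S f) (hS : S ∈ 𝓝 x) :
    ∃ dl dr : ℝ, HasDerivWithinAt f dl (Iic x) x ∧ HasDerivWithinAt f dr (Ici x) x ∧ dl ≤ dr := by
  obtain ⟨ε, hε, hball⟩ := Metric.mem_nhds_iff.mp hS
  have hsub : Ioo (x - ε) (x + ε) ⊆ S := by
    intro y hy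
    apply hball
    rw [Metric.mem_ball, Real.dist_eq, abs_sub_lt_iff]
    constructor <;> linarith [hy.1, hy.2]
  have hxS : x ∈ S := hsub ⟨by linarith, by linarith⟩
  have hmono : MonotoneOn (slope f x) (S \ {x}) := hf.slope_mono hxS
  set a' : ℝ := x - ε / 2 with ha'
  set b' : ℝ := x + ε / 2 with hb'
  have ha'mem : a' ∈ S \ {x} := ⟨hsub ⟨by simp [ha']; linarith, by simp [ha']; linarith⟩,
    by simp [ha']; linarith⟩
  have hb'mem : b' ∈ S \ {x} := ⟨hsub ⟨by simp [hb']; linarith, by simp [hb']; linarith⟩,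
    by simp [hb']; linarith⟩
  have hIoosubR : Ioo x (x + ε) ⊆ S \ {x} := by
    intro y hy; exact ⟨hsub ⟨by linarith [hy.1], hy.2⟩, by simp; linarith [hy.1]⟩
  have hIoosubL : Ioo (x - ε) x ⊆ S \ {x} := by
    intro y hy; exact ⟨hsub ⟨hy.1, by linarith [hy.2]⟩, by simp; linarith [hy.2]⟩
  have hmonoR : MonotoneOn (slope f x) (Ioo x (x + ε)) := hmono.mono hIoosubR
  have hmonoL : MonotoneOn (slope f x) (Ioo (x - ε) x) := hmono.mono hIoosubL
  have hneR : (Ioo x (x + ε)).Nonempty := ⟨b', by constructor <;> simp [hb'] <;> linarith⟩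
  have hneL : (Ioo (x - ε) x).Nonempty := ⟨a', by constructor <;> simp [ha'] <;> linarith⟩
  have hbddR : BddBelow (slope f x '' Ioo x (x + ε)) := by
    refine ⟨slope f x a', ?_⟩
    rintro _ ⟨y, hy, rfl⟩
    exact hmono ha'mem (hIoosubR hy) (by simp [ha'] at *; linarith [hy.1])
  have hbddL : BddAbove (slope f x '' Ioo (x - ε) x) := by
    refine ⟨slope f x b', ?_⟩
    rintro _ ⟨y, hy, rfl⟩
    exact hmono (hIoosubL hy) hb'mem (by simp [hb'] at *; linarith [hy.2])
  set dr := sInf (slope f x '' Ioo x (x + ε)) with hdr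
  set dl := sSup (slope f x '' Ioo (x - ε) x) with hdl
  have htR : Tendsto (slope f x) (𝓝[>] x) (𝓝 dr) :=
    MonotoneOn.tendsto_nhdsWithin_Ioo_right hneR hmonoR hbddR
  have htL : Tendsto (slope f x) (𝓝[<] x) (𝓝 dl) :=
    MonotoneOn.tendsto_nhdsWithin_Ioo_left hneL hmonoL hbddL
  refine ⟨dl, dr, ?_, ?_, ?_⟩
  · rw [hasDerivWithinAt_iff_tendsto_slope, Iic_diff_right]
    exact htL
  · rw [hasDerivWithinAt_iff_tendsto_slope, Ici_sdiff_left]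
    exact htR
  · apply csSup_le (hneL.image _)
    rintro _ ⟨y, hy, rfl⟩
    apply le_csInf (hneR.image _)
    rintro _ ⟨z, hz, rfl⟩
    exact hmono (hIoosubL hy) (hIoosubR hz) (by linarith [hy.2, hz.1])

lemma rpow_self_inv {t s : ℝ} (ht : 0 < t) (hs0 : s ≠ 0) : (t ^ s) ^ (1/s) = t := by
  rw [← Real.rpow_mul ht.le, mul_one_div_cancel hs0, Real.rpow_one]

/-- Composition of a convex function with a differentiable map yields one-sided
derivatives whose order is controlled by the sign of the outer derivative. -/
lemma comp_oneSided {S : Set ℝ} {φ G p : ℝ → ℝ} {x c : ℝ}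
    (hφ : ConvexOn ℝ S φ) (hS : S ∈ 𝓝 x) (hp : HasDerivAt p c (φ x))
    (hG : ∀ y ∈ S, G y = p (φ y)) :
    ∃ gl gr : ℝ, HasDerivWithinAt G gl (Iic x) x ∧ HasDerivWithinAt G gr (Ici x) x ∧
      (c ≤ 0 → gr ≤ gl) ∧ (0 ≤ c → gl ≤ gr) := by
  obtain ⟨dl, dr, hdl, hdr, hldr⟩ := convexOn_oneSided hφ hS
  have hxS : x ∈ S := mem_of_mem_nhds hS
  have hl : HasDerivWithinAt (fun y => p (φ y)) (c * dl) (Iic x) x :=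
    hp.comp_hasDerivWithinAt x hdl
  have hr : HasDerivWithinAt (fun y => p (φ y)) (c * dr) (Ici x) x :=
    hp.comp_hasDerivWithinAt x hdr
  have heq : ∀ᶠ y in 𝓝 x, G y = p (φ y) := by
    filter_upwards [hS] with y hy using hG y hy
  refine ⟨c * dl, c * dr, ?_, ?_, fun hc => mul_le_mul_of_nonpos_left hldr hc,
    fun hc => mul_le_mul_of_nonneg_left hldr hc⟩
  · exact hl.congr_of_eventuallyEq (nhdsWithin_le_nhds heq) (hG x hxS)
  · exact hr.congr_of_eventuallyEq (nhdsWithin_le_nhds heq) (hG x hxS)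

lemma jset_isOpen {G : ℝ → ℝ} (hGc : Continuous G) : IsOpen (JSet G) := by
  have : JSet G = G ⁻¹' (Ioo 0 1) := by ext y; simp [JSet, mem_Ioo]
  rw [this]
  exact isOpen_Ioo.preimage hGc

/-- A bi-s*-concave function is differentiable at each point of its `J`-set. -/
lemma biSStar_hasDerivAt {s : ℝ} (hs0 : s ≠ 0) {G : ℝ → ℝ}
    (hbi : IsBiSStarConcave s G) {x : ℝ} (hx : x ∈ JSet G) :
    ∃ g : ℝ, HasDerivAt G g x := by
  have hGc : Continuous G := hbi.1
  have hS : JSet G ∈ 𝓝 x := (jset_isOpen hGc).mem_nhds hx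
  have hGx : 0 < G x := hx.1
  have hGx1 : G x < 1 := hx.2
  have key : ∃ gl gr gl' gr' : ℝ,
      HasDerivWithinAt G gl (Iic x) x ∧ HasDerivWithinAt G gr (Ici x) x ∧ gr ≤ gl ∧
      HasDerivWithinAt G gl' (Iic x) x ∧ HasDerivWithinAt G gr' (Ici x) x ∧ gl' ≤ gr' := by
    rcases hs0.lt_or_gt with hneg | hpos
    · -- s < 0 : G^s and (1-G)^s convex
      obtain ⟨hφ, hψ⟩ := hbi.2.1 hneg
      have h1s : 1 / s < 0 := one_div_neg.mpr hneg
      -- φ route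
      have hppos : (0:ℝ) < G x ^ s := Real.rpow_pos_of_pos hGx s
      have hp : HasDerivAt (fun y : ℝ => y ^ (1/s)) ((1/s) * (G x ^ s) ^ (1/s - 1)) (G x ^ s) :=
        Real.hasDerivAt_rpow_const (Or.inl hppos.ne')
      have hGeq : ∀ y ∈ JSet G, G y = (G y ^ s) ^ (1/s) := by
        intro y hy
        rw [rpow_self_inv hy.1 hs0]
      obtain ⟨gl, gr, h1, h2, h3, _⟩ := comp_oneSided hφ hS hp hGeq
      have hc : (1/s) * (G x ^ s) ^ (1/s - 1) ≤ 0 :=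
        mul_nonpos_of_nonpos_of_nonneg h1s.le (Real.rpow_nonneg hppos.le _)
      -- ψ route
      have hqpos : (0:ℝ) < (1 - G x) ^ s := Real.rpow_pos_of_pos (by linarith) s
      have hq : HasDerivAt (fun y : ℝ => 1 - y ^ (1/s))
          (-((1/s) * ((1 - G x) ^ s) ^ (1/s - 1))) ((1 - G x) ^ s) :=
        (Real.hasDerivAt_rpow_const (Or.inl hqpos.ne')).const_sub 1
      have hGeq' : ∀ y ∈ JSet G, G y = 1 - ((1 - G y) ^ s) ^ (1/s) := by
        intro y hy
        rw [rpow_self_inv (by linarith [hy.2] : (0:ℝ) < 1 - G y) hs0]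
        ring
      obtain ⟨gl', gr', h1', h2', _, h4'⟩ := comp_oneSided hψ hS hq hGeq'
      have hc' : (0:ℝ) ≤ -((1/s) * ((1 - G x) ^ s) ^ (1/s - 1)) := by
        have := mul_nonpos_of_nonpos_of_nonneg h1s.le (Real.rpow_nonneg hqpos.le (1/s - 1))
        linarith
      exact ⟨gl, gr, gl', gr', h1, h2, h3 hc, h1', h2', h4' hc'⟩
    · -- 0 < s : G^s and (1-G)^s concave
      obtain ⟨hφ₀, hψ₀⟩ := hbi.2.2.2 hpos
      have hφ : ConvexOn ℝ (JSet G) (fun y => -(G y ^ s)) := hφ₀.neg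
      have hψ : ConvexOn ℝ (JSet G) (fun y => -((1 - G y) ^ s)) := hψ₀.neg
      have h1s : 0 < 1 / s := one_div_pos.mpr hpos
      have hppos : (0:ℝ) < G x ^ s := Real.rpow_pos_of_pos hGx s
      have hqpos : (0:ℝ) < (1 - G x) ^ s := Real.rpow_pos_of_pos (by linarith) s
      -- φ route : G = (-(·)) ^ (1/s) ∘ (-(G^s))
      have hp : HasDerivAt (fun y : ℝ => (-y) ^ (1/s))
          (((1/s) * (G x ^ s) ^ (1/s - 1)) * (-1)) (-(G x ^ s)) := by
        have hneg : HasDerivAt (fun y : ℝ => -y) (-1) (-(G x ^ s)) := (hasDerivAt_id _).neg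
        have houter : HasDerivAt (fun z : ℝ => z ^ (1/s)) ((1/s) * (G x ^ s) ^ (1/s - 1))
            (-(-(G x ^ s))) := by rw [neg_neg]; exact Real.hasDerivAt_rpow_const (Or.inl hppos.ne')
        have := houter.comp (-(G x ^ s)) hneg
        simpa [neg_neg, Function.comp_def] using this
      have hGeq : ∀ y ∈ JSet G, G y = (-(-(G y ^ s))) ^ (1/s) := by
        intro y hy
        rw [neg_neg, rpow_self_inv hy.1 hs0]
      obtain ⟨gl, gr, h1, h2, h3, _⟩ := comp_oneSided hφ hS hp hGeq
      have hc : ((1/s) * (G x ^ s) ^ (1/s - 1)) * (-1) ≤ 0 := by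
        have : (0:ℝ) ≤ (1/s) * (G x ^ s) ^ (1/s - 1) :=
          mul_nonneg h1s.le (Real.rpow_nonneg hppos.le _)
        linarith
      -- ψ route : G = 1 - (-(·)) ^ (1/s) ∘ (-((1-G)^s))
      have hq : HasDerivAt (fun y : ℝ => 1 - (-y) ^ (1/s))
          (-((((1/s) * ((1 - G x) ^ s) ^ (1/s - 1))) * (-1))) (-((1 - G x) ^ s)) := by
        have hneg : HasDerivAt (fun y : ℝ => -y) (-1) (-((1 - G x) ^ s)) := (hasDerivAt_id _).neg
        have houter : HasDerivAt (fun z : ℝ => z ^ (1/s)) ((1/s) * ((1 - G x) ^ s) ^ (1/s - 1))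
            (-(-((1 - G x) ^ s))) := by
          rw [neg_neg]; exact Real.hasDerivAt_rpow_const (Or.inl hqpos.ne')
        have := (houter.comp (-((1 - G x) ^ s)) hneg).const_sub 1
        simpa [neg_neg] using this
      have hGeq' : ∀ y ∈ JSet G, G y = 1 - (-(-((1 - G y) ^ s))) ^ (1/s) := by
        intro y hy
        rw [neg_neg, rpow_self_inv (by linarith [hy.2] : (0:ℝ) < 1 - G y) hs0]
        ring
      obtain ⟨gl', gr', h1', h2', _, h4'⟩ := comp_oneSided hψ hS hq hGeq'
      have hc' : (0:ℝ) ≤ -((((1/s) * ((1 - G x) ^ s) ^ (1/s - 1))) * (-1)) := by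
        have : (0:ℝ) ≤ (1/s) * ((1 - G x) ^ s) ^ (1/s - 1) :=
          mul_nonneg h1s.le (Real.rpow_nonneg hqpos.le _)
        linarith
      exact ⟨gl, gr, gl', gr', h1, h2, h3 hc, h1', h2', h4' hc'⟩
  obtain ⟨gl, gr, gl', gr', h1, h2, h3, h1', h2', h4'⟩ := key
  have hul : gl = gl' := by
    have e1 := h1.derivWithin (uniqueDiffOn_Iic x x Set.self_mem_Iic)
    have e2 := h1'.derivWithin (uniqueDiffOn_Iic x x Set.self_mem_Iic)
    rw [← e1, ← e2]
  have hur : gr = gr' := by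
    have e1 := h2.derivWithin (uniqueDiffOn_Ici x x Set.self_mem_Ici)
    have e2 := h2'.derivWithin (uniqueDiffOn_Ici x x Set.self_mem_Ici)
    rw [← e1, ← e2]
  have : gl = gr := le_antisymm (hul ▸ hur ▸ h4') h3
  refine ⟨gr, ?_⟩
  have := (this ▸ h1 : HasDerivWithinAt G gr (Iic x) x).union h2
  rwa [Iic_union_Ici, hasDerivWithinAt_univ] at this

lemma trans_convexOn {s e : ℝ} {G : ℝ → ℝ} (hbi : IsBiSStarConcave s G)
    (he : (e = 1 ∧ s < 0) ∨ (e = -1 ∧ 0 < s)) :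
    ConvexOn ℝ (JSet G) (fun y => e * G y ^ s) := by
  rcases he with ⟨rfl, h⟩ | ⟨rfl, h⟩
  · have heq : (fun y => (1:ℝ) * G y ^ s) = (fun y => G y ^ s) := by funext y; ring
    rw [heq]; exact (hbi.2.1 h).1
  · have heq : (fun y => (-1:ℝ) * G y ^ s) = (-(fun y => G y ^ s)) := by
      funext y; simp
    rw [heq]; exact (hbi.2.2.2 h).1.neg

lemma trans_hasDerivAt {s : ℝ} (hs0 : s ≠ 0) {G : ℝ → ℝ} (hbi : IsBiSStarConcave s G)
    {x : ℝ} (hx : x ∈ JSet G) (e : ℝ) :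
    HasDerivAt (fun y => e * G y ^ s) (e * (s * G x ^ (s-1) * deriv G x)) x := by
  obtain ⟨g, hg⟩ := biSStar_hasDerivAt hs0 hbi hx
  have hd : deriv G x = g := hg.deriv
  have h1 : HasDerivAt (fun y => G y ^ s) (g * s * G x ^ (s-1)) x :=
    hg.rpow_const (Or.inl hx.1.ne')
  have h2 := h1.const_mul e
  rw [hd, show e * (s * G x ^ (s-1) * g) = e * (g * s * G x ^ (s - 1)) by ring]; exact h2



/-- The derivative of an everywhere-differentiable convex function on an open set is
continuous at each point of the set. -/
lemma convexOn_deriv_continuousAt {S : Set ℝ} {f f' : ℝ → ℝ}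
    (hco : ConvexOn ℝ S f) (hop : IsOpen S) (hd : ∀ y ∈ S, HasDerivAt f (f' y) y)
    {x : ℝ} (hx : x ∈ S) : ContinuousAt f' x := by
  have hfx := hd x hx
  have hfc : ContinuousAt f x := hfx.differentiableAt.continuousAt
  have hSev : ∀ᶠ y in 𝓝 x, y ∈ S := hop.eventually_mem hx
  have hslope : Tendsto (slope f x) (𝓝[≠] x) (𝓝 (f' x)) :=
    hasDerivAt_iff_tendsto_slope.mp hfx
  rw [ContinuousAt]
  apply tendsto_order.2
  constructor
  · -- lower: ∀ b < f' x, eventually b < f' y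
    intro b hb
    have hslopeL : Tendsto (slope f x) (𝓝[<] x) (𝓝 (f' x)) :=
      hslope.mono_left (nhdsWithin_mono x fun y hy => ne_of_lt hy)
    obtain ⟨w, hwb, hwS, hwx⟩ :
        ∃ w, b < slope f x w ∧ w ∈ S ∧ w < x := by
      have h1 : ∀ᶠ w in 𝓝[<] x, b < slope f x w := hslopeL.eventually (eventually_gt_nhds hb)
      have h2 : ∀ᶠ w in 𝓝[<] x, w ∈ S := hSev.filter_mono nhdsWithin_le_nhds
      have h3 : ∀ᶠ w in 𝓝[<] x, w < x := self_mem_nhdsWithin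
      obtain ⟨w, hw1, hw2, hw3⟩ := (h1.and (h2.and h3)).exists
      exact ⟨w, hw1, hw2, hw3⟩
    have hgc : ContinuousAt (fun y => (f y - f w) / (y - w)) x :=
      ContinuousAt.div (hfc.sub continuousAt_const) (continuousAt_id.sub continuousAt_const)
        (sub_ne_zero.2 hwx.ne')
    have hgx : b < (f x - f w) / (x - w) := by
      have : slope f x w = (f x - f w) / (x - w) := by
        rw [slope_comm, slope_def_field]
      linarith [this ▸ hwb]
    filter_upwards [hgc.eventually (eventually_gt_nhds hgx), hSev,
        eventually_gt_nhds hwx] with y hy1 hy2 hy3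
    have hsl : slope f w y ≤ f' y :=
      hco.slope_le_of_hasDerivAt hwS hy2 hy3 (hd y hy2)
    have : slope f w y = (f y - f w) / (y - w) := slope_def_field f w y
    linarith [this ▸ hsl]
  · -- upper: ∀ c > f' x, eventually f' y < c
    intro c hc
    have hslopeR : Tendsto (slope f x) (𝓝[>] x) (𝓝 (f' x)) :=
      hslope.mono_left (nhdsWithin_mono x fun y hy => ne_of_gt hy)
    obtain ⟨z, hzc, hzS, hzx⟩ :
        ∃ z, slope f x z < c ∧ z ∈ S ∧ x < z := by
      have h1 : ∀ᶠ z in 𝓝[>] x, slope f x z < c := hslopeR.eventually (eventually_lt_nhds hc)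
      have h2 : ∀ᶠ z in 𝓝[>] x, z ∈ S := hSev.filter_mono nhdsWithin_le_nhds
      have h3 : ∀ᶠ z in 𝓝[>] x, x < z := self_mem_nhdsWithin
      obtain ⟨z, hz1, hz2, hz3⟩ := (h1.and (h2.and h3)).exists
      exact ⟨z, hz1, hz2, hz3⟩
    have hgc : ContinuousAt (fun y => (f z - f y) / (z - y)) x :=
      ContinuousAt.div (continuousAt_const.sub hfc) (continuousAt_const.sub continuousAt_id)
        (sub_ne_zero.2 hzx.ne')
    have hgx : (f z - f x) / (z - x) < c := by
      have : slope f x z = (f z - f x) / (z - x) := slope_def_field f x z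
      linarith [this ▸ hzc]
    filter_upwards [hgc.eventually (eventually_lt_nhds hgx), hSev,
        eventually_lt_nhds hzx] with y hy1 hy2 hy3
    have hsl : f' y ≤ slope f y z :=
      hco.le_slope_of_hasDerivAt hy2 hzS hy3 (hd y hy2)
    have : slope f y z = (f z - f y) / (z - y) := slope_def_field f y z
    linarith [this ▸ hsl]

/-- Monotone functions converging pointwise to a continuous limit converge uniformly on
compact intervals. -/
lemma monotone_unif_conv {F : ℝ → ℝ} (hFc : Continuous F) {L : ℕ → ℝ → ℝ}
    (hmono : ∀ n, Monotone (L n)) (hconv : ∀ x, Tendsto (fun n => L n x) atTop (𝓝 (F x)))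
    (a b : ℝ) {η : ℝ} (hη : 0 < η) :
    ∀ᶠ n in atTop, ∀ x ∈ Icc a b, |L n x - F x| ≤ η := by
  -- choose a modulus at every point
  have hδ : ∀ x : ℝ, ∃ δ > 0, ∀ y, |y - x| < δ → |F y - F x| < η / 4 := by
    intro x
    have := Metric.continuousAt_iff.mp (hFc.continuousAt (x := x)) (η/4) (by linarith)
    obtain ⟨δ, hδpos, hδ⟩ := this
    exact ⟨δ, hδpos, fun y hy => by simpa [Real.dist_eq] using hδ (by simpa [Real.dist_eq] using hy)⟩
  choose δ hδpos hδprop using hδ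
  obtain ⟨t, _, hcov⟩ := (isCompact_Icc (a := a) (b := b)).elim_nhds_subcover
    (fun x => Ioo (x - δ x / 2) (x + δ x / 2))
    (fun x _ => Ioo_mem_nhds (by linarith [hδpos x]) (by linarith [hδpos x]))
  have hev : ∀ᶠ n in atTop, ∀ j ∈ t,
      |L n (j - δ j / 2) - F (j - δ j / 2)| ≤ η/4 ∧
      |L n (j + δ j / 2) - F (j + δ j / 2)| ≤ η/4 := by
    rw [eventually_all_finset]
    intro j _
    have habs : ∀ y : ℝ, ∀ᶠ n in atTop, |L n y - F y| ≤ η/4 := by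
      intro y
      have : ∀ᶠ z in 𝓝 (F y), |z - F y| ≤ η/4 := by
        have := Metric.closedBall_mem_nhds (F y) (show (0:ℝ) < η/4 by linarith)
        exact Filter.mem_of_superset this (fun z hz => by simpa [Metric.mem_closedBall, Real.dist_eq] using hz)
      exact (hconv y).eventually this
    exact (habs _).and (habs _)
  filter_upwards [hev] with n hn x hxab
  obtain ⟨j, hjt, hxj⟩ := mem_iUnion₂.mp (hcov hxab)
  obtain ⟨hj1, hj2⟩ := hn j hjt
  obtain ⟨hx1, hx2⟩ := hxj
  have hδj := hδpos j
  have hFxj : |F x - F j| < η/4 := hδprop j x (by rw [abs_sub_lt_iff]; constructor <;> linarith)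
  have hFuj : |F (j - δ j / 2) - F j| < η/4 := by
    apply hδprop j
    rw [abs_sub_lt_iff]; constructor <;> linarith
  have hFvj : |F (j + δ j / 2) - F j| < η/4 := by
    apply hδprop j
    rw [abs_sub_lt_iff]; constructor <;> linarith
  have hup : L n x ≤ L n (j + δ j / 2) := hmono n (by linarith)
  have hdown : L n (j - δ j / 2) ≤ L n x := hmono n (by linarith)
  rw [abs_sub_lt_iff] at hFxj hFuj hFvj
  rw [abs_sub_le_iff] at hj1 hj2 ⊢
  constructor
  · linarith [hj2.1, hFvj.1, hFxj.2]
  · linarith [hj1.2, hFuj.2, hFxj.1]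

end AuxLemmas

/-- Theorem 7(ii), derivative consistency, deterministic core: let `F` be a
non-degenerate bi-`s*`-concave distribution function (`s* ≤ 1`, `s* ≠ 0`), `K = [k₁, k₂]` a
compact subinterval of `J(F)`, and `L n`, `U n` nondecreasing `[0,1]`-valued functions
converging pointwise to `F`. Then for every `ε > 0`, eventually every bi-`s*`-concave
distribution function `G` sandwiched between `L n` and `U n` satisfies `K ⊆ J(G)` and
`sup_{x ∈ K} |(G^{s*})'(x) - (F^{s*})'(x)| ≤ ε`. -/
theorem sandwiched_derivative_consistency
    (s : ℝ) (hs : s ≤ 1) (hs0 : s ≠ 0)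
    (F : ℝ → ℝ) (hF : IsDistFun F) (hnd : NonDeg F)
    (hbi : IsBiSStarConcave s F)
    (k₁ k₂ : ℝ) (hk : k₁ ≤ k₂) (hK : Icc k₁ k₂ ⊆ JSet F)
    (L U : ℕ → ℝ → ℝ)
    (hLmono : ∀ n, Monotone (L n)) (hUmono : ∀ n, Monotone (U n))
    (hL01 : ∀ n x, 0 ≤ L n x ∧ L n x ≤ 1) (hU01 : ∀ n x, 0 ≤ U n x ∧ U n x ≤ 1)
    (hLconv : ∀ x, Tendsto (fun n => L n x) atTop (nhds (F x)))
    (hUconv : ∀ x, Tendsto (fun n => U n x) atTop (nhds (F x))) :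
    ∀ ε > (0 : ℝ), ∃ N : ℕ, ∀ n ≥ N,
      ∀ G : ℝ → ℝ, IsDistFun G → IsBiSStarConcave s G →
        (∀ x, L n x ≤ G x ∧ G x ≤ U n x) →
        Icc k₁ k₂ ⊆ JSet G ∧
        ∀ x ∈ Icc k₁ k₂,
          |s * G x ^ (s - 1) * deriv G x - s * F x ^ (s - 1) * deriv F x| ≤ ε := by
  intro ε hε
  have hFc : Continuous F := hbi.1
  have hFmono : Monotone F := hF.1
  have hJopen : IsOpen (JSet F) := jset_isOpen hFc
  have hk₁ : k₁ ∈ JSet F := hK ⟨le_refl _, hk⟩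
  have hk₂ : k₂ ∈ JSet F := hK ⟨hk, le_refl _⟩
  obtain ⟨r₁, hr₁, hball₁⟩ := Metric.isOpen_iff.mp hJopen k₁ hk₁
  obtain ⟨r₂, hr₂, hball₂⟩ := Metric.isOpen_iff.mp hJopen k₂ hk₂
  set a := k₁ - r₁/2 with ha_def
  set b := k₂ + r₂/2 with hb_def
  have hak : a < k₁ := by rw [ha_def]; linarith
  have hkb : k₂ < b := by rw [hb_def]; linarith
  have haJ : a ∈ JSet F := hball₁ (by
    rw [Metric.mem_ball, Real.dist_eq, ha_def]
    rw [show k₁ - r₁/2 - k₁ = -(r₁/2) by ring, abs_neg, abs_of_pos (by linarith)]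
    linarith)
  have hbJ : b ∈ JSet F := hball₂ (by
    rw [Metric.mem_ball, Real.dist_eq, hb_def]
    rw [show k₂ + r₂/2 - k₂ = r₂/2 by ring, abs_of_pos (by linarith)]
    linarith)
  have hFa : 0 < F a := haJ.1
  have hFb : F b < 1 := hbJ.2
  have hab : Icc a b ⊆ JSet F := fun x hx =>
    ⟨lt_of_lt_of_le hFa (hFmono hx.1), lt_of_le_of_lt (hFmono hx.2) hFb⟩
  -- sign
  set e : ℝ := if s < 0 then 1 else -1 with he_def
  have he : (e = 1 ∧ s < 0) ∨ (e = -1 ∧ 0 < s) := by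
    rcases hs0.lt_or_gt with h | h
    · left; exact ⟨if_pos h, h⟩
    · right; exact ⟨if_neg (not_lt.mpr h.le), h⟩
  have habs_e : |e| = 1 := by rcases he with ⟨h1, _⟩ | ⟨h1, _⟩ <;> simp [h1]
  -- convex transform of F
  set fF : ℝ → ℝ := fun y => e * F y ^ s with hfF_def
  set fF' : ℝ → ℝ := fun y => e * (s * F y ^ (s-1) * deriv F y) with hfF'_def
  have hfFco : ConvexOn ℝ (JSet F) fF := trans_convexOn hbi he
  have hfFd : ∀ y ∈ JSet F, HasDerivAt fF (fF' y) y := fun y hy =>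
    trans_hasDerivAt hs0 hbi hy e
  have hUC : UniformContinuousOn fF' (Icc a b) :=
    isCompact_Icc.uniformContinuousOn_of_continuous (fun y hy =>
      (convexOn_deriv_continuousAt hfFco hJopen hfFd (hab hy)).continuousWithinAt)
  obtain ⟨δ, hδpos, hδ⟩ := Metric.uniformContinuousOn_iff.mp hUC (ε/2) (by linarith)
  -- step size
  set h : ℝ := min (δ/2) (min (k₁ - a) (b - k₂)) with hh_def
  have hhpos : 0 < h := lt_min (by linarith) (lt_min (by linarith) (by linarith))
  have hh_delta : h ≤ δ/2 := min_le_left _ _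
  have hh_ka : h ≤ k₁ - a := le_trans (min_le_right _ _) (min_le_left _ _)
  have hh_kb : h ≤ b - k₂ := le_trans (min_le_right _ _) (min_le_right _ _)
  -- rpow modulus
  set c₀ : ℝ := F a / 2 with hc₀_def
  set d₀ : ℝ := (1 + F b) / 2 with hd₀_def
  have hc₀ : 0 < c₀ := by rw [hc₀_def]; linarith
  have hrpowUC : UniformContinuousOn (fun t : ℝ => t ^ s) (Icc c₀ d₀) := by
    apply isCompact_Icc.uniformContinuousOn_of_continuous
    intro t ht
    exact (Real.continuousAt_rpow_const t s
      (Or.inl (ne_of_gt (lt_of_lt_of_le hc₀ ht.1)))).continuousWithinAt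
  set η' : ℝ := ε * h / 4 with hη'_def
  have hη'pos : 0 < η' := by rw [hη'_def]; positivity
  obtain ⟨δ₂, hδ₂pos, hδ₂⟩ := Metric.uniformContinuousOn_iff.mp hrpowUC η' hη'pos
  set η : ℝ := min (min (F a / 2) ((1 - F b)/2)) (δ₂/2) with hη_def
  have hηpos : 0 < η := lt_min (lt_min (by linarith) (by linarith)) (by linarith)
  have hη1 : η ≤ F a / 2 := le_trans (min_le_left _ _) (min_le_left _ _)
  have hη2 : η ≤ (1 - F b)/2 := le_trans (min_le_left _ _) (min_le_right _ _)
  have hη3 : η ≤ δ₂/2 := min_le_right _ _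
  -- eventual uniform closeness
  obtain ⟨N, hN⟩ := eventually_atTop.mp
    ((monotone_unif_conv hFc hLmono hLconv a b hηpos).and
      (monotone_unif_conv hFc hUmono hUconv a b hηpos))
  refine ⟨N, fun n hn G _ hGbi hsand => ?_⟩
  obtain ⟨hLn, hUn⟩ := hN n hn
  have hGclose : ∀ x ∈ Icc a b, |G x - F x| ≤ η := by
    intro x hx
    have h1 := hLn x hx
    have h2 := hUn x hx
    have h3 := (hsand x).1
    have h4 := (hsand x).2
    rw [abs_sub_le_iff] at h1 h2 ⊢
    exact ⟨by linarith [h2.1], by linarith [h1.2]⟩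
  have hFIcc : ∀ x ∈ Icc a b, F x ∈ Icc c₀ d₀ := by
    intro x hx
    have h1 : F a ≤ F x := hFmono hx.1
    have h2 : F x ≤ F b := hFmono hx.2
    exact ⟨by rw [hc₀_def]; linarith, by rw [hd₀_def]; linarith⟩
  have hGIcc : ∀ x ∈ Icc a b, G x ∈ Icc c₀ d₀ := by
    intro x hx
    have h1 := hGclose x hx
    rw [abs_sub_le_iff] at h1
    have h2 : F a ≤ F x := hFmono hx.1
    have h3 : F x ≤ F b := hFmono hx.2
    exact ⟨by rw [hc₀_def]; linarith [h1.2], by rw [hd₀_def]; linarith [h1.1]⟩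
  have hGJ : Icc a b ⊆ JSet G := by
    intro x hx
    have h1 := hGIcc x hx
    have hd₀1 : d₀ < 1 := by rw [hd₀_def]; linarith
    exact ⟨lt_of_lt_of_le hc₀ h1.1, lt_of_le_of_lt h1.2 hd₀1⟩
  -- transform of G
  set fG : ℝ → ℝ := fun y => e * G y ^ s with hfG_def
  have hfGco : ConvexOn ℝ (JSet G) fG := trans_convexOn hGbi he
  have hfclose : ∀ y ∈ Icc a b, |fG y - fF y| ≤ η' := by
    intro y hy
    have h1 : dist (G y ^ s) (F y ^ s) < η' :=
      hδ₂ (G y) (hGIcc y hy) (F y) (hFIcc y hy)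
        (by rw [Real.dist_eq]; linarith [hGclose y hy])
    rw [Real.dist_eq] at h1
    have : fG y - fF y = e * (G y ^ s - F y ^ s) := by rw [hfG_def, hfF_def]; ring
    rw [this, abs_mul, habs_e, one_mul]
    linarith
  refine ⟨fun x hx => hGJ ⟨le_trans hak.le hx.1, le_trans hx.2 hkb.le⟩, ?_⟩
  intro x hxK
  have hxab : x ∈ Icc a b := ⟨le_trans hak.le hxK.1, le_trans hxK.2 hkb.le⟩
  have hxJF : x ∈ JSet F := hK hxK
  have hxJG : x ∈ JSet G := hGJ hxab
  have hxpab : x + h ∈ Icc a b := ⟨by linarith [hxab.1], by linarith [hxK.2]⟩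
  have hxmab : x - h ∈ Icc a b := ⟨by linarith [hxK.1], by linarith [hxab.2]⟩
  set A : ℝ := e * (s * G x ^ (s-1) * deriv G x) with hA_def
  have hA : HasDerivAt fG A x := trans_hasDerivAt hs0 hGbi hxJG e
  have hB : fF' x = e * (s * F x ^ (s-1) * deriv F x) := rfl
  have hne : h ≠ 0 := hhpos.ne'
  have h2η : 2 * η' / h = ε / 2 := by
    rw [hη'_def]; field_simp; ring
  -- auxiliary : uniform continuity bound
  have hUCbound : ∀ y ∈ Icc a b, |y - x| ≤ δ/2 → |fF' y - fF' x| ≤ ε/2 := by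
    intro y hy hyd
    have := hδ y hy x hxab (by rw [Real.dist_eq]; linarith)
    rw [Real.dist_eq] at this
    linarith
  -- upper bound : A ≤ fF' x + ε
  have hupper : A ≤ fF' x + ε := by
    have s1 : A ≤ slope fG x (x + h) :=
      hfGco.le_slope_of_hasDerivAt hxJG (hGJ hxpab) (by linarith) hA
    have s2 : slope fG x (x + h) ≤ slope fF x (x + h) + 2 * η' / h := by
      have e1 := hfclose (x + h) hxpab
      have e2 := hfclose x hxab
      rw [abs_sub_le_iff] at e1 e2
      rw [slope_def_field, slope_def_field, (show x + h - x = h by ring), ← add_div]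
      exact (div_le_div_iff_of_pos_right hhpos).mpr (by linarith [e1.1, e2.2])
    have s3 : slope fF x (x + h) ≤ fF' (x + h) :=
      hfFco.slope_le_of_hasDerivAt (hab hxab) (hab hxpab) (by linarith)
        (hfFd _ (hab hxpab))
    have s4 : fF' (x + h) ≤ fF' x + ε/2 := by
      have := hUCbound (x + h) hxpab (by
        rw [(show x + h - x = h by ring), abs_of_pos hhpos]; linarith)
      rw [abs_sub_le_iff] at this
      linarith [this.1]
    linarith [h2η]
  -- lower bound : fF' x - ε ≤ A
  have hlower : fF' x - ε ≤ A := by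
    have s1 : slope fG (x - h) x ≤ A :=
      hfGco.slope_le_of_hasDerivAt (hGJ hxmab) hxJG (by linarith) hA
    have s2 : slope fF (x - h) x ≤ slope fG (x - h) x + 2 * η' / h := by
      have e1 := hfclose (x - h) hxmab
      have e2 := hfclose x hxab
      rw [abs_sub_le_iff] at e1 e2
      rw [slope_def_field, slope_def_field, (show x - (x - h) = h by ring), ← add_div]
      exact (div_le_div_iff_of_pos_right hhpos).mpr (by linarith [e1.1, e2.2])
    have s3 : fF' (x - h) ≤ slope fF (x - h) x :=
      hfFco.le_slope_of_hasDerivAt (hab hxmab) (hab hxab) (by linarith)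
        (hfFd _ (hab hxmab))
    have s4 : fF' x ≤ fF' (x - h) + ε/2 := by
      have := hUCbound (x - h) hxmab (by
        rw [(show x - h - x = -h by ring), abs_neg, abs_of_pos hhpos]; linarith)
      rw [abs_sub_le_iff] at this
      linarith [this.2]
    linarith [h2η]
  -- conclude
  have hAB : |A - fF' x| ≤ ε := abs_sub_le_iff.mpr ⟨by linarith, by linarith⟩
  have hfinal : A - fF' x
      = e * (s * G x ^ (s-1) * deriv G x - s * F x ^ (s-1) * deriv F x) := by
    rw [hA_def, hB]; ring
  calc |s * G x ^ (s - 1) * deriv G x - s * F x ^ (s - 1) * deriv F x|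
      = |e| * |s * G x ^ (s - 1) * deriv G x - s * F x ^ (s - 1) * deriv F x| := by
        rw [habs_e, one_mul]
    _ = |A - fF' x| := by rw [← abs_mul, ← hfinal]
    _ ≤ ε := hAB
end

section
/- (Corollary 8, deterministic core.) Let s* < 0 and let F be a non-degenerate bi-s*-concave distribution function. Let (L_n) and (U_n) be sequences of nondecreasing functions ℝ → [0,1] such that for every x ∈ ℝ, L_n(x) → F(x) and U_n(x) → F(x) as n → ∞, and define L_n^o(x) = inf{ H(x) : H ∈ P_{s*}, L_n ≤ H ≤ U_n pointwise } and U_n^o(x) = sup{ H(x) : H ∈ P_{s*}, L_n ≤ H ≤ U_n pointwise } (with L_n^o ≡ 1 and U_n^o ≡ 0 when this class is empty). Let φ : ℝ → ℝ be locally absolutely continuous with continuous derivative φ′ satisfying |φ′(x)| ≤ a |x|^{k−1} for all x ≠ 0, for some constants a > 0 and 0 < k < −1/s*. Then for all sufficiently large n, φ is integrable with respect to the Lebesgue–Stieltjes measure of every distribution function G with L_n^o ≤ G ≤ U_n^o, and sup{ | ∫ φ dG − ∫ φ dF | : G a distribution function with L_n^o ≤ G ≤ U_n^o pointwise } → 0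 as n → ∞ (supremum over the empty class being 0). -/
set_option maxHeartbeats 1000000


open Set MeasureTheory Filter
open scoped NNReal ENNReal

/-- The shape-constrained lower band `L^o`: pointwise infimum of all bi-`s*`-concave
distribution functions fitting between `L` and `U` (equal to `1` when no such function
exists, since every fitting function is bounded by `1`). -/
noncomputable def refinedLower (s : ℝ) (L U : ℝ → ℝ) (x : ℝ) : ℝ :=
  sInf ({1} ∪ {y : ℝ | ∃ H : ℝ → ℝ, IsDistFun H ∧ IsBiSStarConcave s H ∧
    (∀ z, L z ≤ H z ∧ H z ≤ U z) ∧ H x = y})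

/-- The shape-constrained upper band `U^o`: pointwise supremum of all bi-`s*`-concave
distribution functions fitting between `L` and `U` (equal to `0` when no such function
exists, since every fitting function is bounded below by `0`). -/
noncomputable def refinedUpper (s : ℝ) (L U : ℝ → ℝ) (x : ℝ) : ℝ :=
  sSup ({0} ∪ {y : ℝ | ∃ H : ℝ → ℝ, IsDistFun H ∧ IsBiSStarConcave s H ∧
    (∀ z, L z ≤ H z ∧ H z ≤ U z) ∧ H x = y})

lemma cdf_measure_univ {G : ℝ → ℝ} (hG : Tendsto G atTop (nhds 1))
    {μ : Measure ℝ} (hμ : ∀ x, μ (Iic x) = ENNReal.ofReal (G x)) :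
    μ univ = 1 := by
  have h1 : Tendsto (fun x => μ (Iic x)) atTop (nhds (μ univ)) :=
    tendsto_measure_Iic_atTop μ
  have h2 : Tendsto (fun x => μ (Iic x)) atTop (nhds (ENNReal.ofReal 1)) := by
    simp only [hμ]
    exact (ENNReal.continuous_ofReal.tendsto 1).comp hG
  have := tendsto_nhds_unique h1 h2
  simpa using this

lemma cdf_measure_Ioi {G : ℝ → ℝ} (hG01 : ∀ x, 0 ≤ G x ∧ G x ≤ 1)
    {μ : Measure ℝ} [IsProbabilityMeasure μ]
    (hμ : ∀ x, μ (Iic x) = ENNReal.ofReal (G x)) (t : ℝ) :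
    μ (Ioi t) = ENNReal.ofReal (1 - G t) := by
  have hc : μ (Ioi t) = μ univ - μ (Iic t) := by
    rw [← compl_Iic]
    exact measure_compl measurableSet_Iic (measure_ne_top μ _)
  rw [hc, hμ, measure_univ, ENNReal.ofReal_sub _ (hG01 t).1]
  simp

lemma left_tail {H : ℝ → ℝ} (hmono : Monotone H) (h01 : ∀ x, 0 ≤ H x ∧ H x ≤ 1)
    {s : ℝ} (hs : s < 0) (hcx : ConvexOn ℝ (JSet H) (fun y => H y ^ s))
    {p q α β : ℝ} (hpq : p < q) (hα : 0 < α) (hα1 : α < 1) (hαβ : α < β) (hβ1 : β ≤ 1)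
    (hHp : H p ≤ α) (hHq : β ≤ H q) (hHq1 : H q < 1) :
    ∀ x ≤ p, H x ≤ (1 + (α ^ s - β ^ s) * ((q - x) / (q - p))) ^ (1/s) := by
  intro x hxp
  have hβ0 : 0 < β := hα.trans hαβ
  have hc : 0 < α ^ s - β ^ s := sub_pos.2 (Real.rpow_lt_rpow_of_neg hα hαβ hs)
  have hβs1 : 1 ≤ β ^ s := Real.one_le_rpow_of_pos_of_le_one_of_nonpos hβ0 hβ1 hs.le
  have hqp : 0 < q - p := sub_pos.2 hpq
  have hqx : 0 < q - x := by linarith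
  have hratio : (1:ℝ) ≤ (q - x) / (q - p) := (one_le_div hqp).2 (by linarith)
  have hz : (1:ℝ) < 1 + (α ^ s - β ^ s) * ((q - x) / (q - p)) := by nlinarith
  rcases eq_or_lt_of_le (h01 x).1 with h0 | hx0
  · rw [← h0]; positivity
  have key : 1 + (α ^ s - β ^ s) * ((q - x) / (q - p)) ≤ H x ^ s := by
    have hHpx : H x ≤ H p := hmono hxp
    have hHp0 : 0 < H p := lt_of_lt_of_le hx0 hHpx
    have hHps : α ^ s ≤ H p ^ s := Real.rpow_le_rpow_of_nonpos hHp0 hHp hs.le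
    rcases eq_or_lt_of_le hxp with rfl | hxplt
    · rw [div_self hqp.ne']
      linarith
    · have hxJ : x ∈ JSet H := ⟨hx0, lt_of_le_of_lt (hHpx.trans hHp) hα1⟩
      have hqJ : q ∈ JSet H := ⟨hβ0.trans_le hHq, hHq1⟩
      have hA0 : 0 < (q - p) / (q - x) := div_pos hqp hqx
      have hB0 : 0 < (p - x) / (q - x) := div_pos (by linarith) hqx
      have hAB : (q - p) / (q - x) + (p - x) / (q - x) = 1 := by field_simp; ring
      have hcomb := hcx.2 hxJ hqJ hA0.le hB0.le hAB
      have hpt : ((q - p) / (q - x)) • x + ((p - x) / (q - x)) • q = p := by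
        rw [smul_eq_mul, smul_eq_mul]; field_simp; ring
      rw [hpt] at hcomb
      have hcomb' : H p ^ s ≤ ((q - p) / (q - x)) * H x ^ s
          + ((p - x) / (q - x)) * H q ^ s := by
        simpa using hcomb
      have hHqs : H q ^ s ≤ β ^ s := Real.rpow_le_rpow_of_nonpos hβ0 hHq hs.le
      have e1 : ((p - x) / (q - x)) * H q ^ s ≤ ((p - x) / (q - x)) * β ^ s :=
        mul_le_mul_of_nonneg_left hHqs hB0.le
      have e2 : ((q - p) / (q - x)) * 1 ≤ ((q - p) / (q - x)) * β ^ s :=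
        mul_le_mul_of_nonneg_left hβs1 hA0.le
      have e3 : ((q - p) / (q - x)) * β ^ s + ((p - x) / (q - x)) * β ^ s = β ^ s := by
        rw [← add_mul, hAB, one_mul]
      have hAz : ((q - p) / (q - x)) * ((q - x) / (q - p)) = 1 := by field_simp
      -- multiply goal by A
      have h1 : ((q - p) / (q - x)) * (1 + (α ^ s - β ^ s) * ((q - x) / (q - p)))
          ≤ ((q - p) / (q - x)) * H x ^ s := by
        have expand : ((q - p) / (q - x)) * (1 + (α ^ s - β ^ s) * ((q - x) / (q - p)))
            = ((q - p) / (q - x)) * 1 + (α ^ s - β ^ s)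
              * (((q - p) / (q - x)) * ((q - x) / (q - p))) := by ring
        rw [expand, hAz, mul_one, mul_one]
        linarith
      exact le_of_mul_le_mul_left h1 hA0
  have hxinv : H x = (H x ^ s) ^ (1/s) := by
    rw [one_div, Real.rpow_rpow_inv hx0.le hs.ne]
  rw [hxinv]
  exact Real.rpow_le_rpow_of_nonpos (by linarith) key
    (by rw [one_div]; exact inv_nonpos.2 hs.le)

lemma right_tail {H : ℝ → ℝ} (hmono : Monotone H) (h01 : ∀ x, 0 ≤ H x ∧ H x ≤ 1)
    {s : ℝ} (hs : s < 0) (hcx : ConvexOn ℝ (JSet H) (fun y => (1 - H y) ^ s))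
    {p q α β : ℝ} (hpq : p < q) (hα : 0 < α) (hα1 : α < 1) (hαβ : α < β) (hβ1 : β ≤ 1)
    (hHq : 1 - H q ≤ α) (hHp : β ≤ 1 - H p) (hHp1 : 1 - H p < 1) :
    ∀ x, q ≤ x → 1 - H x ≤ (1 + (α ^ s - β ^ s) * ((x - p) / (q - p))) ^ (1/s) := by
  intro x hqx
  set H' : ℝ → ℝ := fun y => 1 - H (-y) with hH'
  have hmono' : Monotone H' := fun u v huv => by
    simp only [hH']
    have : H (-v) ≤ H (-u) := hmono (by linarith)
    linarith
  have h01' : ∀ y, 0 ≤ H' y ∧ H' y ≤ 1 := fun y => by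
    have := h01 (-y); constructor <;> simp only [hH'] <;> linarith [this.1, this.2]
  have hJ : JSet H' = Neg.neg ⁻¹' (JSet H) := by
    ext y
    simp only [JSet, mem_setOf_eq, mem_preimage, hH']
    constructor <;> intro h <;> constructor <;> linarith [h.1, h.2]
  have hcx' : ConvexOn ℝ (JSet H') (fun y => H' y ^ s) := by
    constructor
    · rw [hJ]
      have : Neg.neg ⁻¹' (JSet H) = -(JSet H) := by
        ext y; simp [Set.mem_neg]
      rw [this]
      exact hcx.1.neg
    · intro u hu v hv a b ha hb hab
      have hu' : -u ∈ JSet H := by rw [hJ] at hu; exact hu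
      have hv' : -v ∈ JSet H := by rw [hJ] at hv; exact hv
      have := hcx.2 hu' hv' ha hb hab
      have heq : a • (-u) + b • (-v) = -(a • u + b • v) := by
        simp [smul_eq_mul]; ring
      rw [heq] at this
      simpa [hH'] using this
  have key := left_tail hmono' h01' hs hcx' (p := -q) (q := -p)
    (by linarith) hα hα1 hαβ hβ1
    (by simpa [hH'] using hHq) (by simpa [hH'] using hHp) (by simpa [hH'] using hHp1)
    (-x) (by linarith)
  have harg : (-p - -x) / (-p - -q) = (x - p) / (q - p) := by
    rw [show -p - -x = x - p by ring, show -p - -q = q - p by ring]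
  rw [harg] at key
  simpa [hH'] using key

lemma integrableOn_comp_neg {f : ℝ → ℝ} {s : Set ℝ} (hs : MeasurableSet s)
    (h : IntegrableOn f s) : IntegrableOn (fun x => f (-x)) (Neg.neg ⁻¹' s) := by
  have h2 := ((integrable_indicator_iff hs).2 h).comp_neg
  have heq : (Neg.neg ⁻¹' s).indicator (fun x => f (-x)) = fun x => s.indicator f (-x) := by
    funext x
    by_cases hx : -x ∈ s <;> simp [Set.indicator, hx, Set.mem_preimage]
  apply (integrable_indicator_iff (hs.preimage measurable_neg)).1
  rw [heq]
  exact h2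

lemma env_integrable {k r b C : ℝ} (hk : 0 < k) (hr : r < 0) (hkr : k + r < 0)
    (hb : 0 < b) (hC : 0 ≤ C) :
    Integrable (fun x => |x| ^ (k - 1) * min 1 (C * (b * (1 + |x|)) ^ r)) volume := by
  set f : ℝ → ℝ := fun x => |x| ^ (k - 1) * min 1 (C * (b * (1 + |x|)) ^ r) with hf
  have hmeas : Measurable f := by measurability
  have hnonneg : ∀ x, 0 ≤ f x := fun x => by
    apply mul_nonneg (Real.rpow_nonneg (abs_nonneg x) _)
    exact le_min zero_le_one (mul_nonneg hC (Real.rpow_nonneg (by positivity) r))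
  have hminle1 : ∀ x, min 1 (C * (b * (1 + |x|)) ^ r) ≤ 1 := fun x => min_le_left _ _
  have hI1 : IntegrableOn f (Ioc 0 1) volume := by
    have hg : IntegrableOn (fun x : ℝ => x ^ (k - 1)) (Ioc 0 1) volume := by
      rw [← intervalIntegrable_iff_integrableOn_Ioc_of_le zero_le_one]
      exact intervalIntegral.intervalIntegrable_rpow' (by linarith)
    apply Integrable.mono' hg (hmeas.aestronglyMeasurable.restrict)
    rw [ae_restrict_iff' measurableSet_Ioc]
    filter_upwards with x hx
    have hx0 : 0 < x := hx.1
    rw [Real.norm_eq_abs, abs_of_nonneg (hnonneg x)]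
    calc f x ≤ |x| ^ (k - 1) * 1 :=
          mul_le_mul_of_nonneg_left (hminle1 x) (Real.rpow_nonneg (abs_nonneg x) _)
      _ = x ^ (k - 1) := by rw [mul_one, abs_of_pos hx0]
  have hI2 : IntegrableOn f (Ioi 1) volume := by
    have hg : IntegrableOn (fun x : ℝ => C * b ^ r * x ^ (k - 1 + r)) (Ioi 1) volume :=
      (integrableOn_Ioi_rpow_of_lt (by linarith) one_pos).const_mul _
    apply Integrable.mono' hg (hmeas.aestronglyMeasurable.restrict)
    rw [ae_restrict_iff' measurableSet_Ioi]
    filter_upwards with x hx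
    have hx1 : (1:ℝ) < x := hx
    have hx0 : (0:ℝ) < x := by linarith
    have hax : (0:ℝ) < |x| := abs_pos.2 hx0.ne'
    rw [Real.norm_eq_abs, abs_of_nonneg (hnonneg x)]
    have step1 : (b * (1 + |x|)) ^ r ≤ (b * |x|) ^ r := by
      apply Real.rpow_le_rpow_of_nonpos (by positivity) _ hr.le
      nlinarith
    have step2 : (b * |x|) ^ r = b ^ r * |x| ^ r := Real.mul_rpow hb.le hax.le
    calc f x ≤ |x| ^ (k - 1) * (C * (b * (1 + |x|)) ^ r) :=
          mul_le_mul_of_nonneg_left (min_le_right _ _) (Real.rpow_nonneg (abs_nonneg x) _)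
      _ ≤ |x| ^ (k - 1) * (C * (b ^ r * |x| ^ r)) := by
          apply mul_le_mul_of_nonneg_left _ (Real.rpow_nonneg (abs_nonneg x) _)
          rw [← step2]
          exact mul_le_mul_of_nonneg_left step1 hC
      _ = C * b ^ r * (|x| ^ (k - 1) * |x| ^ r) := by ring
      _ = C * b ^ r * x ^ (k - 1 + r) := by
          rw [← Real.rpow_add hax, abs_of_pos hx0]
  have hIoi : IntegrableOn f (Ioi 0) volume := by
    have := hI1.union hI2
    rwa [Ioc_union_Ioi_eq_Ioi zero_le_one] at this
  have hIio : IntegrableOn f (Iio 0) volume := by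
    have heven : (fun x => f (-x)) = f := by
      funext x; simp only [hf, abs_neg]
    have h2 := integrableOn_comp_neg measurableSet_Ioi hIoi
    rw [heven] at h2
    have hpre : Neg.neg ⁻¹' (Ioi (0:ℝ)) = Iio 0 := by ext y; simp
    rwa [hpre] at h2
  have hunion : IntegrableOn f (Iio 0 ∪ Ioi 0) volume := hIio.union hIoi
  rw [← integrableOn_univ]
  have hae : (Iio (0:ℝ) ∪ Ioi 0 : Set ℝ) =ᵐ[volume] (univ : Set ℝ) := by
    rw [Set.Iio_union_Ioi, ae_eq_univ]
    simp
  rwa [IntegrableOn, Measure.restrict_congr_set hae] at hunion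

lemma cdf_repr (G : ℝ → ℝ) (hmono : Monotone G) (h01 : ∀ x, 0 ≤ G x ∧ G x ≤ 1)
    (μ : Measure ℝ) [IsProbabilityMeasure μ]
    (hIic : ∀ x, μ (Iic x) = ENNReal.ofReal (G x))
    (φ φ' : ℝ → ℝ) (hφ : ∀ x, HasDerivAt φ (φ' x) x) (hφ'c : Continuous φ')
    (w : ℝ → ℝ) (hw : Integrable w volume)
    (hwbd : ∀ᵐ t ∂(volume : Measure ℝ), |φ' t| * (if 0 ≤ t then 1 - G t else G t) ≤ w t) :
    Integrable φ μ ∧ Integrable (fun t => φ' t * (if 0 ≤ t then 1 - G t else -G t)) volume ∧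
      ∫ x, φ x ∂μ = φ 0 + ∫ t, φ' t * (if 0 ≤ t then 1 - G t else -G t) := by
  have hGmeas : Measurable G := hmono.measurable
  have hφc : Continuous φ := by
    rw [continuous_iff_continuousAt]; exact fun x => (hφ x).continuousAt
  have hIoi : ∀ t, μ (Ioi t) = ENNReal.ofReal (1 - G t) := by
    intro t
    have hc : μ (Ioi t) = μ univ - μ (Iic t) := by
      rw [← compl_Iic]
      exact measure_compl measurableSet_Iic (measure_ne_top μ _)
    rw [hc, hIic, measure_univ, ENNReal.ofReal_sub _ (h01 t).1]
    simp
  set K : ℝ × ℝ → ℝ := fun z =>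
    φ' z.2 * ((if 0 ≤ z.2 ∧ z.2 < z.1 then (1:ℝ) else 0)
      - (if z.1 ≤ z.2 ∧ z.2 < 0 then (1:ℝ) else 0)) with hK
  have hKmeas : Measurable K := by
    apply Measurable.mul (hφ'c.measurable.comp measurable_snd)
    apply Measurable.sub
    · exact Measurable.ite
        (((measurableSet_le measurable_const measurable_snd)).inter
          (measurableSet_lt measurable_snd measurable_fst)) measurable_const measurable_const
    · exact Measurable.ite
        (((measurableSet_le measurable_fst measurable_snd)).inter
          (measurableSet_lt measurable_snd measurable_const)) measurable_const measurable_const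
  -- sections for fixed t
  have hsect1 : ∀ t : ℝ, 0 ≤ t → (fun x => K (x, t))
      = fun x => φ' t * (Ioi t).indicator (fun _ => (1:ℝ)) x := by
    intro t ht
    funext x
    have hnot : ¬ (x ≤ t ∧ t < 0) := by rintro ⟨_, h2⟩; linarith
    by_cases hlt : t < x
    · simp [hK, Set.indicator, mem_Ioi, ht, hlt, hnot]
    · simp [hK, Set.indicator, mem_Ioi, ht, hlt, hnot]
  have hsect2 : ∀ t : ℝ, t < 0 → (fun x => K (x, t))
      = fun x => -(φ' t * (Iic t).indicator (fun _ => (1:ℝ)) x) := by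
    intro t ht
    funext x
    have hnot : ¬ (0 ≤ t ∧ t < x) := by rintro ⟨h1, _⟩; linarith
    by_cases hle : x ≤ t
    · simp [hK, Set.indicator, mem_Iic, ht, hle, hnot]
    · simp [hK, Set.indicator, mem_Iic, ht, hle, hnot]
  -- sections for fixed x
  have hsecx : ∀ x : ℝ, (fun t => K (x, t)) =
      fun t => (if 0 ≤ x then (Ico (0:ℝ) x).indicator φ' t
        else -((Ico x (0:ℝ)).indicator φ' t)) := by
    intro x
    funext t
    rcases le_or_gt 0 x with hx | hx
    · rw [if_pos hx]
      by_cases hmem : 0 ≤ t ∧ t < x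
      · have h2 : ¬ (x ≤ t ∧ t < 0) := by rintro ⟨h1, h2'⟩; linarith [hmem.1]
        simp [hK, Set.indicator, mem_Ico, hmem, h2]
      · have h2 : ¬ (x ≤ t ∧ t < 0) := by rintro ⟨h1, h2'⟩; linarith
        simp [hK, Set.indicator, mem_Ico, hmem, h2]
    · rw [if_neg (not_le.2 hx)]
      by_cases hmem : x ≤ t ∧ t < 0
      · have h1 : ¬ (0 ≤ t ∧ t < x) := by rintro ⟨h1', h2'⟩; linarith [hmem.2]
        simp [hK, Set.indicator, mem_Ico, hmem, h1]
      · have h1 : ¬ (0 ≤ t ∧ t < x) := by rintro ⟨h1', h2'⟩; linarith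
        simp [hK, Set.indicator, mem_Ico, hmem, h1]
  -- norms of x-sections integrate to the weight function
  have hnormint : ∀ t : ℝ, ∫ x, ‖K (x, t)‖ ∂μ
      = |φ' t| * (if 0 ≤ t then 1 - G t else G t) := by
    intro t
    rcases le_or_gt 0 t with ht | ht
    · rw [if_pos ht]
      have : (fun x => ‖K (x, t)‖)
          = fun x => |φ' t| * (Ioi t).indicator (fun _ => (1:ℝ)) x := by
        have h1 := hsect1 t ht
        funext x
        have : K (x, t) = φ' t * (Ioi t).indicator (fun _ => (1:ℝ)) x := congrFun h1 x
        rw [this, Real.norm_eq_abs, abs_mul]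
        congr 1
        by_cases hx : x ∈ Ioi t <;> simp [Set.indicator, hx]
      rw [this, integral_const_mul, integral_indicator_const _ measurableSet_Ioi]
      rw [measureReal_def, hIoi t]
      rw [ENNReal.toReal_ofReal (by linarith [(h01 t).2])]
      simp
    · rw [if_neg (not_le.2 ht)]
      have : (fun x => ‖K (x, t)‖)
          = fun x => |φ' t| * (Iic t).indicator (fun _ => (1:ℝ)) x := by
        have h1 := hsect2 t ht
        funext x
        have : K (x, t) = -(φ' t * (Iic t).indicator (fun _ => (1:ℝ)) x) := congrFun h1 x
        rw [this, norm_neg, Real.norm_eq_abs, abs_mul]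
        congr 1
        by_cases hx : x ∈ Iic t <;> simp [Set.indicator, hx]
      rw [this, integral_const_mul, integral_indicator_const _ measurableSet_Iic]
      rw [measureReal_def, hIic t, ENNReal.toReal_ofReal (h01 t).1]
      simp
  -- integrability of K on the product
  have hverif : Integrable (fun t => ∫ x, ‖K (x, t)‖ ∂μ) volume := by
    have heq : (fun t => ∫ x, ‖K (x, t)‖ ∂μ)
        = fun t => |φ' t| * (if 0 ≤ t then 1 - G t else G t) := funext hnormint
    rw [heq]
    apply Integrable.mono' hw
    · apply Measurable.aestronglyMeasurable
      apply Measurable.mul (hφ'c.measurable.abs)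
      exact Measurable.ite (measurableSet_le measurable_const measurable_id)
        (measurable_const.sub hGmeas) hGmeas
    · filter_upwards [hwbd] with t hwt
      rw [Real.norm_eq_abs, abs_of_nonneg]
      · exact hwt
      · apply mul_nonneg (abs_nonneg _)
        by_cases ht : 0 ≤ t
        · rw [if_pos ht]; linarith [(h01 t).2]
        · rw [if_neg ht]; exact (h01 t).1
  have hsectint : ∀ t : ℝ, Integrable (fun x => K (x, t)) μ := by
    intro t
    rcases le_or_gt 0 t with ht | ht
    · rw [hsect1 t ht]
      exact ((integrable_const (1:ℝ)).indicator measurableSet_Ioi).const_mul _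
    · rw [hsect2 t ht]
      exact (((integrable_const (1:ℝ)).indicator measurableSet_Iic).const_mul _).neg
  have hKint : Integrable K (μ.prod volume) := by
    rw [integrable_prod_iff' hKmeas.aestronglyMeasurable]
    exact ⟨Filter.Eventually.of_forall hsectint, hverif⟩
  -- inner integral in t
  have hinner : ∀ x : ℝ, ∫ t, K (x, t) = φ x - φ 0 := by
    intro x
    have hFTC : ∫ t in (0:ℝ)..x, φ' t = φ x - φ 0 :=
      intervalIntegral.integral_eq_sub_of_hasDerivAt (fun t _ => hφ t)
        (hφ'c.intervalIntegrable _ _)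
    rw [hsecx x]
    rcases le_or_gt 0 x with hx | hx
    · simp only [if_pos hx]
      rw [integral_indicator measurableSet_Ico]
      rw [integral_Ico_eq_integral_Ioo, ← integral_Ioc_eq_integral_Ioo,
        ← intervalIntegral.integral_of_le hx]
      exact hFTC
    · simp only [if_neg (not_le.2 hx)]
      rw [integral_neg, integral_indicator measurableSet_Ico]
      rw [integral_Ico_eq_integral_Ioo, ← integral_Ioc_eq_integral_Ioo,
        ← intervalIntegral.integral_of_le hx.le]
      have : ∫ t in x..(0:ℝ), φ' t = φ 0 - φ x :=
        intervalIntegral.integral_eq_sub_of_hasDerivAt (fun t _ => hφ t)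
          (hφ'c.intervalIntegrable _ _)
      rw [this]; ring
  -- inner integral in x
  have hinner2 : ∀ t : ℝ, ∫ x, K (x, t) ∂μ
      = φ' t * (if 0 ≤ t then 1 - G t else -G t) := by
    intro t
    rcases le_or_gt 0 t with ht | ht
    · rw [hsect1 t ht, if_pos ht, integral_const_mul,
        integral_indicator_const _ measurableSet_Ioi, measureReal_def, hIoi t,
        ENNReal.toReal_ofReal (by linarith [(h01 t).2])]
      simp
    · rw [hsect2 t ht, if_neg (not_le.2 ht), integral_neg, integral_const_mul,
        integral_indicator_const _ measurableSet_Iic, measureReal_def, hIic t,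
        ENNReal.toReal_ofReal (h01 t).1]
      simp
  -- integrability of φ
  have hφsub : Integrable (fun x => φ x - φ 0) μ := by
    have h2 := (integrable_prod_iff hKmeas.aestronglyMeasurable).1 hKint
    apply Integrable.mono' h2.2 ((hφc.sub continuous_const).aestronglyMeasurable)
    filter_upwards with x
    rw [show ((φ - fun x => φ 0 : ℝ → ℝ)) x = φ x - φ 0 from rfl, ← hinner x]
    exact norm_integral_le_integral_norm _
  have hφint : Integrable φ μ := by
    have heq : φ = fun x => (φ x - φ 0) + φ 0 := by funext x; ring
    rw [heq]
    exact hφsub.add (integrable_const _)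
  have hright_int :
      Integrable (fun t => φ' t * (if 0 ≤ t then 1 - G t else -G t)) volume := by
    have h3 := hKint.integral_prod_right
    have heq : (fun t => ∫ x, K (x, t) ∂μ)
        = fun t => φ' t * (if 0 ≤ t then 1 - G t else -G t) := funext hinner2
    rwa [heq] at h3
  refine ⟨hφint, hright_int, ?_⟩
  have h12 : ∫ x, (∫ t, K (x, t)) ∂μ = ∫ t, (∫ x, K (x, t) ∂μ) := by
    rw [← integral_prod _ hKint, integral_prod_symm _ hKint]
  have e1 : ∫ x, (∫ t, K (x, t)) ∂μ = ∫ x, φ x ∂μ - φ 0 := by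
    have : (fun x => ∫ t, K (x, t)) = fun x => φ x - φ 0 := funext hinner
    rw [this, integral_sub hφint (integrable_const _), integral_const]
    simp
  have e2 : ∫ t, (∫ x, K (x, t) ∂μ)
      = ∫ t, φ' t * (if 0 ≤ t then 1 - G t else -G t) := by
    congr 1
    exact funext hinner2
  rw [e1, e2] at h12
  linarith

/-- Corollary 8, deterministic core: let `s* < 0`, `F` a non-degenerate
bi-`s*`-concave distribution function with Lebesgue–Stieltjes measure `μF`, `L n`, `U n`
nondecreasing `[0,1]`-valued functions converging pointwise to `F`, and `φ` a `C¹` function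
with `|φ'(x)| ≤ a |x|^{k-1}` for `x ≠ 0`, where `0 < k < -1/s*`. Then for all sufficiently
large `n`, `φ` is integrable with respect to the Lebesgue–Stieltjes measure of every
distribution function `G` sandwiched between the refined bands `L^o_n` and `U^o_n`, and
`sup_G |∫ φ dG − ∫ φ dF| → 0`. -/
theorem refined_band_functional_consistency
    (s : ℝ) (hs : s < 0)
    (F : ℝ → ℝ) (hF : IsDistFun F) (hnd : NonDeg F)
    (hbi : IsBiSStarConcave s F)
    (μF : Measure ℝ) (hμF : ∀ x, μF (Iic x) = ENNReal.ofReal (F x))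
    (L U : ℕ → ℝ → ℝ)
    (hLmono : ∀ n, Monotone (L n)) (hUmono : ∀ n, Monotone (U n))
    (hL01 : ∀ n x, 0 ≤ L n x ∧ L n x ≤ 1) (hU01 : ∀ n x, 0 ≤ U n x ∧ U n x ≤ 1)
    (hLconv : ∀ x, Tendsto (fun n => L n x) atTop (nhds (F x)))
    (hUconv : ∀ x, Tendsto (fun n => U n x) atTop (nhds (F x)))
    (φ φ' : ℝ → ℝ) (hφ : ∀ x, HasDerivAt φ (φ' x) x) (hφ'cont : Continuous φ')
    (a k : ℝ) (ha : 0 < a) (hk0 : 0 < k) (hk : k < -1 / s)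
    (hφ'bd : ∀ x : ℝ, x ≠ 0 → |φ' x| ≤ a * |x| ^ (k - 1)) :
    ∀ ε > (0 : ℝ), ∃ N : ℕ, ∀ n ≥ N,
      ∀ G : ℝ → ℝ, IsDistFun G →
        (∀ x, refinedLower s (L n) (U n) x ≤ G x ∧ G x ≤ refinedUpper s (L n) (U n) x) →
        ∀ μG : Measure ℝ, (∀ x, μG (Iic x) = ENNReal.ofReal (G x)) →
          Integrable φ μG ∧ |∫ x, φ x ∂μG - ∫ x, φ x ∂μF| ≤ ε := by
  intro ε hε
  haveI hPF : IsProbabilityMeasure μF := ⟨cdf_measure_univ hF.2.2.2.2 hμF⟩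
  obtain ⟨x0, hx01, hx02⟩ := hnd
  have hFcont : Continuous F := hbi.1
  have hFmono : Monotone F := hF.1
  -- choose p < q with 0 < F p < F q < 1
  obtain ⟨p0, hp0⟩ : ∃ p0, F p0 < F x0 / 2 :=
    ((hF.2.2.2.1).eventually_lt_const (by linarith)).exists
  have hp0x0 : p0 ≤ x0 := by
    by_contra h
    push_neg at h
    have := hFmono h.le
    linarith
  obtain ⟨p, hpmem, hp⟩ : ∃ p ∈ Icc p0 x0, F p = F x0 / 2 := by
    have him := intermediate_value_Icc hp0x0 hFcont.continuousOn
    have hmem : F x0 / 2 ∈ Icc (F p0) (F x0) := ⟨hp0.le, by linarith⟩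
    obtain ⟨p, hp1, hp2⟩ := him hmem
    exact ⟨p, hp1, hp2⟩
  set q := x0 with hqdef
  have hFp0 : 0 < F p := by rw [hp]; linarith
  have hFpq : F p < F q := by rw [hp]; linarith
  have hFq1 : F q < 1 := hx02
  have hFp1 : F p < 1 := by linarith
  have hpq : p < q := by
    rcases lt_or_ge p q with h | h
    · exact h
    · exfalso; have := hFmono h; linarith
  have hqp0 : 0 < q - p := by linarith
  -- constants
  obtain ⟨η, hη0, hη1, hη2, hη3⟩ : ∃ η : ℝ, 0 < η ∧ η ≤ F p / 2 ∧
      η ≤ (1 - F q) / 2 ∧ η ≤ (F q - F p) / 4 :=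
    ⟨min (F p / 2) (min ((1 - F q) / 2) ((F q - F p) / 4)),
      lt_min (by linarith) (lt_min (by linarith) (by linarith)),
      min_le_left _ _, (min_le_right _ _).trans (min_le_left _ _),
      (min_le_right _ _).trans (min_le_right _ _)⟩
  set α : ℝ := F p + η with hαdef
  set β : ℝ := F q - η with hβdef
  set γ : ℝ := F q + η with hγdef
  set αL : ℝ := F p - η with hαLdef
  have hα0 : 0 < α := by rw [hαdef]; linarith
  have hα1 : α < 1 := by rw [hαdef]; linarith
  have hαβ : α < β := by rw [hαdef, hβdef]; linarith
  have hβ0 : 0 < β := by rw [hβdef]; linarith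
  have hβ1 : β ≤ 1 := by rw [hβdef]; linarith
  have hγ1 : γ < 1 := by rw [hγdef]; linarith
  have hαL0 : 0 < αL := by rw [hαLdef]; linarith
  have hFpα : F p < α := by rw [hαdef]; linarith
  have hFpα' : F p ≤ α := hFpα.le
  have hβFq : β < F q := by rw [hβdef]; linarith
  have hβFq' : β ≤ F q := hβFq.le
  have hFqγ : F q < γ := by rw [hγdef]; linarith
  have hαLFp : αL < F p := by rw [hαLdef]; linarith
  clear_value α β γ αL
  clear hαdef hβdef hγdef hαLdef hη1 hη2 hη3
  -- right-side constants
  set α' : ℝ := 1 - β with hα'def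
  set β' : ℝ := 1 - α with hβ'def
  have hα'0 : 0 < α' := by rw [hα'def]; linarith
  have hα'1 : α' < 1 := by rw [hα'def]; linarith
  have hα'β' : α' < β' := by rw [hα'def, hβ'def]; linarith
  have hβ'1 : β' ≤ 1 := by rw [hβ'def]; linarith
  have hα'G : ∀ y : ℝ, β ≤ y → 1 - y ≤ α' := by
    intro y hy; rw [hα'def]; linarith
  have hβ'G : ∀ y : ℝ, y ≤ α → β' ≤ 1 - y := by
    intro y hy; rw [hβ'def]; linarith
  clear_value α' β'
  clear hα'def hβ'def
  set cL : ℝ := α ^ s - β ^ s with hcLdef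
  set cR : ℝ := α' ^ s - β' ^ s with hcRdef
  have hcL0 : 0 < cL := sub_pos.2 (Real.rpow_lt_rpow_of_neg hα0 hαβ hs)
  have hcR0 : 0 < cR := sub_pos.2 (Real.rpow_lt_rpow_of_neg hα'0 hα'β' hs)
  clear_value cL cR
  -- envelope constants
  obtain ⟨b, hb0, hbp, hbL, hbq, hbR⟩ : ∃ b : ℝ, 0 < b ∧ b ≤ (1 + |p|)⁻¹ ∧
      b ≤ cL / (q - p) ∧ b ≤ (1 + |q|)⁻¹ ∧ b ≤ cR / (q - p) := by
    refine ⟨min (min ((1 + |p|)⁻¹) (cL / (q - p))) (min ((1 + |q|)⁻¹) (cR / (q - p))),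
      ?_, ?_, ?_, ?_, ?_⟩
    · apply lt_min (lt_min (by positivity) (by positivity))
        (lt_min (by positivity) (by positivity))
    · exact (min_le_left _ _).trans (min_le_left _ _)
    · exact (min_le_left _ _).trans (min_le_right _ _)
    · exact (min_le_right _ _).trans (min_le_left _ _)
    · exact (min_le_right _ _).trans (min_le_right _ _)
  set m : ℝ := max |p| |q| with hmdef
  have hm0 : 0 ≤ m := (abs_nonneg p).trans (le_max_left _ _)
  have hpm : -m ≤ p := by
    have h1 : |p| ≤ m := le_max_left _ _
    have := neg_abs_le p
    linarith
  have hqm : q ≤ m := (le_abs_self q).trans (le_max_right _ _)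
  clear_value m
  clear hmdef
  set δ0 : ℝ := (b * (1 + m)) ^ (1 / s) with hδ0def
  have hδ0 : 0 < δ0 := Real.rpow_pos_of_pos (mul_pos hb0 (by linarith)) _
  set C0 : ℝ := max 1 δ0⁻¹ with hC0def
  have hC0 : 1 ≤ C0 := le_max_left _ _
  have hC0' : 0 ≤ C0 := by linarith
  have hC0inv : δ0⁻¹ ≤ C0 := le_max_right _ _
  clear_value C0
  clear hC0def
  have h1s : 1 / s < 0 := div_neg_of_pos_of_neg one_pos hs
  have h1s' : 1 / s ≤ 0 := h1s.le
  have hk1s : k + 1 / s < 0 := by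
    have h : -1 / s = -(1 / s) := by ring
    rw [h] at hk
    linarith
  -- the envelope W
  set W : ℝ → ℝ := fun x => min 1 (C0 * (b * (1 + |x|)) ^ (1 / s)) with hWdef
  have hbpos : ∀ x : ℝ, 0 < b * (1 + |x|) := fun x =>
    mul_pos hb0 (by positivity)
  have hW0 : ∀ x, 0 ≤ W x := fun x =>
    le_min zero_le_one (mul_nonneg hC0' (Real.rpow_nonneg (hbpos x).le _))
  have hW1 : ∀ x, W x ≤ 1 := fun x => min_le_left _ _
  have hWcont : Continuous W := by
    apply continuous_const.min
    apply continuous_const.mul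
    apply Continuous.rpow_const
    · exact continuous_const.mul (continuous_const.add continuous_abs)
    · intro x
      exact Or.inl (ne_of_gt (hbpos x))
  have hWone : ∀ x, |x| ≤ m → W x = 1 := by
    intro x hx
    have hbase : b * (1 + |x|) ≤ b * (1 + m) :=
      mul_le_mul_of_nonneg_left (by linarith) hb0.le
    have h1 : δ0 ≤ (b * (1 + |x|)) ^ (1 / s) := by
      rw [hδ0def]
      exact Real.rpow_le_rpow_of_nonpos (hbpos x) hbase h1s'
    have h2 : (1:ℝ) ≤ C0 * (b * (1 + |x|)) ^ (1 / s) := by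
      calc (1:ℝ) = δ0⁻¹ * δ0 := (inv_mul_cancel₀ hδ0.ne').symm
        _ ≤ C0 * (b * (1 + |x|)) ^ (1 / s) :=
            mul_le_mul hC0inv h1 hδ0.le hC0'
    exact min_eq_left h2
  -- envelope comparisons
  have hBLW : ∀ x ≤ p, (1 + cL * ((q - x) / (q - p))) ^ (1 / s)
      ≤ C0 * (b * (1 + |x|)) ^ (1 / s) := by
    intro x hxp
    have habsx : |x| ≤ |p| + (p - x) := by
      have h1 : |x| ≤ |p| + |x - p| := by
        calc |x| = |p + (x - p)| := by ring_nf
          _ ≤ |p| + |x - p| := abs_add_le _ _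
      have h2 : |x - p| = p - x := by
        rw [abs_sub_comm, abs_of_nonneg (by linarith)]
      linarith
    have hb1 : b ≤ (1 + |p|)⁻¹ := hbp
    have hb2 : b ≤ cL / (q - p) := hbL
    have hbase : b * (1 + |x|) ≤ 1 + cL * ((q - x) / (q - p)) := by
      have e1 : b * (1 + |x|) ≤ b * ((1 + |p|) + (p - x)) :=
        mul_le_mul_of_nonneg_left (by linarith) hb0.le
      have e2 : b * (1 + |p|) ≤ 1 := by
        calc b * (1 + |p|) ≤ (1 + |p|)⁻¹ * (1 + |p|) :=
              mul_le_mul_of_nonneg_right hb1 (by positivity)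
          _ = 1 := inv_mul_cancel₀ (by positivity)
      have e3 : b * (p - x) ≤ (cL / (q - p)) * (p - x) :=
        mul_le_mul_of_nonneg_right hb2 (by linarith)
      have e4 : (cL / (q - p)) * (p - x) ≤ cL * ((q - x) / (q - p)) := by
        rw [div_mul_eq_mul_div, mul_div_assoc]
        exact mul_le_mul_of_nonneg_left
          ((div_le_div_iff_of_pos_right hqp0).2 (by linarith)) hcL0.le
      have e5 : b * ((1 + |p|) + (p - x)) = b * (1 + |p|) + b * (p - x) := by ring
      linarith
    have h1 : (1 + cL * ((q - x) / (q - p))) ^ (1 / s) ≤ (b * (1 + |x|)) ^ (1 / s) :=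
      Real.rpow_le_rpow_of_nonpos (hbpos x) hbase h1s'
    calc (1 + cL * ((q - x) / (q - p))) ^ (1 / s) ≤ (b * (1 + |x|)) ^ (1 / s) := h1
      _ ≤ C0 * (b * (1 + |x|)) ^ (1 / s) :=
          le_mul_of_one_le_left (Real.rpow_nonneg (hbpos x).le _) hC0
  have hBRW : ∀ x, q ≤ x → (1 + cR * ((x - p) / (q - p))) ^ (1 / s)
      ≤ C0 * (b * (1 + |x|)) ^ (1 / s) := by
    intro x hqx
    have habsx : |x| ≤ |q| + (x - q) := by
      have h1 : |x| ≤ |q| + |x - q| := by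
        calc |x| = |q + (x - q)| := by ring_nf
          _ ≤ |q| + |x - q| := abs_add_le _ _
      have h2 : |x - q| = x - q := abs_of_nonneg (by linarith)
      linarith
    have hb1 : b ≤ (1 + |q|)⁻¹ := hbq
    have hb2 : b ≤ cR / (q - p) := hbR
    have hbase : b * (1 + |x|) ≤ 1 + cR * ((x - p) / (q - p)) := by
      have e1 : b * (1 + |x|) ≤ b * ((1 + |q|) + (x - q)) :=
        mul_le_mul_of_nonneg_left (by linarith) hb0.le
      have e2 : b * (1 + |q|) ≤ 1 := by
        calc b * (1 + |q|) ≤ (1 + |q|)⁻¹ * (1 + |q|) :=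
              mul_le_mul_of_nonneg_right hb1 (by positivity)
          _ = 1 := inv_mul_cancel₀ (by positivity)
      have e3 : b * (x - q) ≤ (cR / (q - p)) * (x - q) :=
        mul_le_mul_of_nonneg_right hb2 (by linarith)
      have e4 : (cR / (q - p)) * (x - q) ≤ cR * ((x - p) / (q - p)) := by
        rw [div_mul_eq_mul_div, mul_div_assoc]
        exact mul_le_mul_of_nonneg_left
          ((div_le_div_iff_of_pos_right hqp0).2 (by linarith)) hcR0.le
      have e5 : b * ((1 + |q|) + (x - q)) = b * (1 + |q|) + b * (x - q) := by ring
      linarith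
    have h1 : (1 + cR * ((x - p) / (q - p))) ^ (1 / s) ≤ (b * (1 + |x|)) ^ (1 / s) :=
      Real.rpow_le_rpow_of_nonpos (hbpos x) hbase h1s'
    calc (1 + cR * ((x - p) / (q - p))) ^ (1 / s) ≤ (b * (1 + |x|)) ^ (1 / s) := h1
      _ ≤ C0 * (b * (1 + |x|)) ^ (1 / s) :=
          le_mul_of_one_le_left (Real.rpow_nonneg (hbpos x).le _) hC0
  -- integrable envelope
  have hWint : Integrable (fun x => |x| ^ (k - 1) * W x) volume :=
    env_integrable hk0 h1s hk1s hb0 hC0'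
  set bound : ℝ → ℝ := fun x => a * (|x| ^ (k - 1) * W x) with hbounddef
  have hboundint : Integrable bound volume := hWint.const_mul a
  have hWmeas : Measurable W := hWcont.measurable
  have habsmeas : Measurable (fun x : ℝ => |x| ^ (k - 1)) := by measurability
  -- a.e. nonzero
  have hne : ∀ᵐ (x : ℝ) ∂(volume : Measure ℝ), x ≠ 0 := by
    rw [ae_iff]
    have hset : {x : ℝ | ¬ x ≠ 0} = {0} := by ext x; simp
    rw [hset]
    exact measure_singleton 0
  -- the sequence of dominating functions
  set d : ℕ → ℝ → ℝ := fun n x => |U n x - F x| + |F x - L n x| with hddef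
  have hdmeas : ∀ n, Measurable (d n) := fun n =>
    (((hUmono n).measurable.sub hFmono.measurable).abs).add
      ((hFmono.measurable.sub (hLmono n).measurable).abs)
  have hd0 : ∀ n x, 0 ≤ d n x := fun n x =>
    add_nonneg (abs_nonneg _) (abs_nonneg _)
  set gseq : ℕ → ℝ → ℝ := fun n x => a * (|x| ^ (k - 1) * min (d n x) (W x)) with hgdef
  have hgmeas : ∀ n, AEStronglyMeasurable (gseq n) volume := fun n =>
    ((measurable_const.mul (habsmeas.mul ((hdmeas n).min hWmeas)))).aestronglyMeasurable
  have hg0 : ∀ n x, 0 ≤ gseq n x := fun n x =>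
    mul_nonneg ha.le (mul_nonneg (Real.rpow_nonneg (abs_nonneg _) _)
      (le_min (hd0 n x) (hW0 x)))
  have hgbd : ∀ n, ∀ᵐ x ∂(volume : Measure ℝ), ‖gseq n x‖ ≤ bound x := by
    intro n
    filter_upwards with x
    rw [Real.norm_eq_abs, abs_of_nonneg (hg0 n x)]
    apply mul_le_mul_of_nonneg_left _ ha.le
    apply mul_le_mul_of_nonneg_left (min_le_right _ _) (Real.rpow_nonneg (abs_nonneg _) _)
  have hgtend : ∀ᵐ x ∂(volume : Measure ℝ),
      Tendsto (fun n => gseq n x) atTop (nhds 0) := by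
    filter_upwards with x
    have hdx : Tendsto (fun n => d n x) atTop (nhds 0) := by
      have h1 : Tendsto (fun n => |U n x - F x|) atTop (nhds 0) := by
        have := ((hUconv x).sub_const (F x)).abs
        simpa using this
      have h2 : Tendsto (fun n => |F x - L n x|) atTop (nhds 0) := by
        have := ((hLconv x).const_sub (F x)).abs
        simpa using this
      have := h1.add h2
      simpa using this
    apply squeeze_zero (fun n => hg0 n x)
      (g := fun n => (a * |x| ^ (k - 1)) * d n x)
    · intro n
      have : min (d n x) (W x) ≤ d n x := min_le_left _ _
      calc gseq n x = a * (|x| ^ (k - 1) * min (d n x) (W x)) := rfl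
        _ ≤ a * (|x| ^ (k - 1) * d n x) := by
            apply mul_le_mul_of_nonneg_left _ ha.le
            exact mul_le_mul_of_nonneg_left this (Real.rpow_nonneg (abs_nonneg _) _)
        _ = (a * |x| ^ (k - 1)) * d n x := by ring
    · have := hdx.const_mul (a * |x| ^ (k - 1))
      simpa using this
  have hDCT : Tendsto (fun n => ∫ x, gseq n x) atTop (nhds 0) := by
    have h := tendsto_integral_of_dominated_convergence bound hgmeas hboundint hgbd hgtend
    simpa using h
  obtain ⟨N1, hN1⟩ := eventually_atTop.1 (hDCT.eventually_le_const hε)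
  -- eventual band conditions
  have hev : ∀ᶠ n in atTop,
      U n p ≤ α ∧ β ≤ L n q ∧ U n q ≤ γ ∧ αL ≤ L n p := by
    have e1 : ∀ᶠ n in atTop, U n p ≤ α :=
      (hUconv p).eventually_le_const hFpα
    have e2 : ∀ᶠ n in atTop, β ≤ L n q :=
      (hLconv q).eventually_const_le hβFq
    have e3 : ∀ᶠ n in atTop, U n q ≤ γ :=
      (hUconv q).eventually_le_const hFqγ
    have e4 : ∀ᶠ n in atTop, αL ≤ L n p :=
      (hLconv p).eventually_const_le hαLFp
    filter_upwards [e1, e2, e3, e4] with n h1 h2 h3 h4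
    exact ⟨h1, h2, h3, h4⟩
  obtain ⟨N0, hN0⟩ := eventually_atTop.1 hev
  refine ⟨max N0 N1, fun n hn => ?_⟩
  obtain ⟨hUp, hLq, hUq, hLp⟩ := hN0 n ((le_max_left _ _).trans hn)
  have hIn : ∫ x, gseq n x ≤ ε := hN1 n ((le_max_right _ _).trans hn)
  intro G hG hsand μG hμG
  haveI hPG : IsProbabilityMeasure μG := ⟨cdf_measure_univ hG.2.2.2.2 hμG⟩
  simp only [refinedLower, refinedUpper] at hsand
  -- basic band bounds
  have hlow : ∀ x, L n x ≤ G x := by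
    intro x
    refine le_trans (le_csInf ?_ ?_) (hsand x).1
    · exact ⟨1, Set.mem_union_left _ rfl⟩
    rintro y (rfl | ⟨H, hH, hHbi, hfit, rfl⟩)
    · exact (hL01 n x).2
    · exact (hfit x).1
  have hup : ∀ x, G x ≤ U n x := by
    intro x
    refine le_trans (hsand x).2 (Real.sSup_le ?_ (hU01 n x).1)
    rintro y (rfl | ⟨H, hH, hHbi, hfit, rfl⟩)
    · exact (hU01 n x).1
    · exact (hfit x).2
  -- tail bounds
  set BL : ℝ → ℝ := fun x => (1 + cL * ((q - x) / (q - p))) ^ (1 / s) with hBLdef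
  set BR : ℝ → ℝ := fun x => (1 + cR * ((x - p) / (q - p))) ^ (1 / s) with hBRdef
  have hBL0 : ∀ x ≤ p, 0 ≤ BL x := by
    intro x hxp
    simp only [hBLdef]
    apply Real.rpow_nonneg
    have h0 : 0 ≤ (q - x) / (q - p) := div_nonneg (by linarith) (by linarith)
    have := mul_nonneg hcL0.le h0
    linarith
  have hBR0 : ∀ x, q ≤ x → 0 ≤ BR x := by
    intro x hqx
    simp only [hBRdef]
    apply Real.rpow_nonneg
    have h0 : 0 ≤ (x - p) / (q - p) := div_nonneg (by linarith) (by linarith)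
    have := mul_nonneg hcR0.le h0
    linarith
  have hGBL : ∀ x ≤ p, G x ≤ BL x := by
    intro x hxp
    refine le_trans (hsand x).2 (Real.sSup_le ?_ (hBL0 x hxp))
    rintro y (rfl | ⟨H, hH, hHbi, hfit, rfl⟩)
    · exact hBL0 x hxp
    · have h := left_tail hH.1 hH.2.1 hs (hHbi.2.1 hs).1 hpq hα0 hα1 hαβ hβ1
        (le_trans (hfit p).2 hUp) (le_trans hLq (hfit q).1)
        (lt_of_le_of_lt (le_trans (hfit q).2 hUq) hγ1) x hxp
      simpa only [hBLdef, hcLdef] using h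
  have hFBL : ∀ x ≤ p, F x ≤ BL x := by
    intro x hxp
    have h := left_tail hF.1 hF.2.1 hs (hbi.2.1 hs).1 hpq hα0 hα1 hαβ hβ1
      hFpα' hβFq' hFq1 x hxp
    simpa only [hBLdef, hcLdef] using h
  have hGBR : ∀ x, q ≤ x → 1 - G x ≤ BR x := by
    intro x hqx
    have hinf : 1 - BR x ≤ sInf ({1} ∪ {y : ℝ | ∃ H : ℝ → ℝ, IsDistFun H ∧
        IsBiSStarConcave s H ∧ (∀ z, L n z ≤ H z ∧ H z ≤ U n z) ∧ H x = y}) := by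
      refine le_csInf ?_ ?_
      · exact ⟨1, Set.mem_union_left _ rfl⟩
      rintro y (rfl | ⟨H, hH, hHbi, hfit, rfl⟩)
      · linarith [hBR0 x hqx]
      · have := right_tail hH.1 hH.2.1 hs (hHbi.2.1 hs).2 hpq hα'0 hα'1 hα'β' hβ'1
          (hα'G _ (le_trans hLq (hfit q).1))
          (hβ'G _ (le_trans (hfit p).2 hUp))
          (by have := lt_of_lt_of_le hαL0 (le_trans hLp (hfit p).1); linarith)
          x hqx
        simp only [hBRdef, hcRdef]
        linarith
    linarith [le_trans hinf (hsand x).1]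
  have hFBR : ∀ x, q ≤ x → 1 - F x ≤ BR x := by
    intro x hqx
    have h := right_tail hF.1 hF.2.1 hs (hbi.2.1 hs).2 hpq hα'0 hα'1 hα'β' hβ'1
      (hα'G _ hβFq') (hβ'G _ hFpα') (by linarith) x hqx
    simp only [hBRdef, hcRdef]
    linarith
  -- key pointwise claims
  have hBLW' : ∀ x ≤ p, BL x ≤ C0 * (b * (1 + |x|)) ^ (1 / s) := hBLW
  have hBRW' : ∀ x, q ≤ x → BR x ≤ C0 * (b * (1 + |x|)) ^ (1 / s) := hBRW
  have claimGF : ∀ x, |G x - F x| ≤ W x := by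
    intro x
    rcases le_or_gt |x| m with hxm | hxm
    · rw [hWone x hxm]
      have h1 := (hG.2.1 x).1; have h2 := (hG.2.1 x).2
      have h3 := (hF.2.1 x).1; have h4 := (hF.2.1 x).2
      rw [abs_le]; constructor <;> linarith
    · rcases le_or_gt x 0 with hx0 | hx0
      · -- x < -m ≤ p
        have hxp : x ≤ p := by
          have : |x| = -x := abs_of_nonpos hx0
          linarith
        have h1 := hGBL x hxp
        have h2 := hFBL x hxp
        have h3 := (hG.2.1 x).1
        have h4 := (hF.2.1 x).1
        apply le_min
        · have h5 := (hG.2.1 x).2; have h6 := (hF.2.1 x).2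
          rw [abs_le]; constructor <;> linarith
        · have habs : |G x - F x| ≤ BL x := by
            rw [abs_le]; constructor <;> linarith
          exact habs.trans (hBLW' x hxp)
      · -- x > m ≥ q
        have hqx : q ≤ x := by
          have : |x| = x := abs_of_pos hx0
          linarith
        have h1 := hGBR x hqx
        have h2 := hFBR x hqx
        have h3 := (hG.2.1 x).2
        have h4 := (hF.2.1 x).2
        apply le_min
        · have h5 := (hG.2.1 x).1; have h6 := (hF.2.1 x).1
          rw [abs_le]; constructor <;> linarith
        · have habs : |G x - F x| ≤ BR x := by
            rw [abs_le]; constructor <;> linarith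
          exact habs.trans (hBRW' x hqx)
  have claimwG : ∀ x, (if 0 ≤ x then 1 - G x else G x) ≤ W x := by
    intro x
    rcases le_or_gt |x| m with hxm | hxm
    · rw [hWone x hxm]
      have h1 := (hG.2.1 x).1; have h2 := (hG.2.1 x).2
      by_cases hx : 0 ≤ x
      · rw [if_pos hx]; linarith
      · rw [if_neg hx]; linarith
    · rcases le_or_gt x 0 with hx0 | hx0
      · have hxneg : x < 0 := by
          rcases lt_or_eq_of_le hx0 with h | h
          · exact h
          · exfalso; rw [h] at hxm; simp at hxm; linarith
        have hxp : x ≤ p := by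
          have : |x| = -x := abs_of_nonpos hx0
          linarith
        rw [if_neg (not_le.2 hxneg)]
        apply le_min (hG.2.1 x).2
        exact (hGBL x hxp).trans (hBLW' x hxp)
      · have hqx : q ≤ x := by
          have : |x| = x := abs_of_pos hx0
          linarith
        rw [if_pos hx0.le]
        apply le_min (by linarith [(hG.2.1 x).1])
        exact (hGBR x hqx).trans (hBRW' x hqx)
  have claimwF : ∀ x, (if 0 ≤ x then 1 - F x else F x) ≤ W x := by
    intro x
    rcases le_or_gt |x| m with hxm | hxm
    · rw [hWone x hxm]
      have h1 := (hF.2.1 x).1; have h2 := (hF.2.1 x).2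
      by_cases hx : 0 ≤ x
      · rw [if_pos hx]; linarith
      · rw [if_neg hx]; linarith
    · rcases le_or_gt x 0 with hx0 | hx0
      · have hxneg : x < 0 := by
          rcases lt_or_eq_of_le hx0 with h | h
          · exact h
          · exfalso; rw [h] at hxm; simp at hxm; linarith
        have hxp : x ≤ p := by
          have : |x| = -x := abs_of_nonpos hx0
          linarith
        rw [if_neg (not_le.2 hxneg)]
        apply le_min (hF.2.1 x).2
        exact (hFBL x hxp).trans (hBLW' x hxp)
      · have hqx : q ≤ x := by
          have : |x| = x := abs_of_pos hx0
          linarith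
        rw [if_pos hx0.le]
        apply le_min (by linarith [(hF.2.1 x).1])
        exact (hFBR x hqx).trans (hBRW' x hqx)
  -- apply the representation lemma
  have hwbdG : ∀ᵐ t ∂(volume : Measure ℝ),
      |φ' t| * (if 0 ≤ t then 1 - G t else G t) ≤ bound t := by
    filter_upwards [hne] with t ht
    have h1 : |φ' t| ≤ a * |t| ^ (k - 1) := hφ'bd t ht
    have h2 := claimwG t
    have h3 : (0:ℝ) ≤ if 0 ≤ t then 1 - G t else G t := by
      by_cases htt : 0 ≤ t
      · rw [if_pos htt]; linarith [(hG.2.1 t).2]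
      · rw [if_neg htt]; exact (hG.2.1 t).1
    calc |φ' t| * (if 0 ≤ t then 1 - G t else G t)
        ≤ (a * |t| ^ (k - 1)) * W t :=
          mul_le_mul h1 h2 h3
            (mul_nonneg ha.le (Real.rpow_nonneg (abs_nonneg _) _))
      _ = bound t := by simp only [hbounddef]; ring
  have hwbdF : ∀ᵐ t ∂(volume : Measure ℝ),
      |φ' t| * (if 0 ≤ t then 1 - F t else F t) ≤ bound t := by
    filter_upwards [hne] with t ht
    have h1 : |φ' t| ≤ a * |t| ^ (k - 1) := hφ'bd t ht
    have h2 := claimwF t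
    have h3 : (0:ℝ) ≤ if 0 ≤ t then 1 - F t else F t := by
      by_cases htt : 0 ≤ t
      · rw [if_pos htt]; linarith [(hF.2.1 t).2]
      · rw [if_neg htt]; exact (hF.2.1 t).1
    calc |φ' t| * (if 0 ≤ t then 1 - F t else F t)
        ≤ (a * |t| ^ (k - 1)) * W t :=
          mul_le_mul h1 h2 h3
            (mul_nonneg ha.le (Real.rpow_nonneg (abs_nonneg _) _))
      _ = bound t := by simp only [hbounddef]; ring
  obtain ⟨hintG, hintG', hreprG⟩ :=
    cdf_repr G hG.1 hG.2.1 μG hμG φ φ' hφ hφ'cont bound hboundint hwbdG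
  obtain ⟨hintF, hintF', hreprF⟩ :=
    cdf_repr F hF.1 hF.2.1 μF hμF φ φ' hφ hφ'cont bound hboundint hwbdF
  refine ⟨hintG, ?_⟩
  have hdiff : ∫ x, φ x ∂μG - ∫ x, φ x ∂μF
      = ∫ t, (φ' t * (if 0 ≤ t then 1 - G t else -G t)
          - φ' t * (if 0 ≤ t then 1 - F t else -F t)) := by
    rw [hreprG, hreprF, integral_sub hintG' hintF']
    ring
  rw [hdiff]
  have hgnint : Integrable (gseq n) volume := by
    apply Integrable.mono' hboundint (hgmeas n)
    exact hgbd n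
  have habs : |∫ t, (φ' t * (if 0 ≤ t then 1 - G t else -G t)
      - φ' t * (if 0 ≤ t then 1 - F t else -F t))|
      ≤ ∫ t, gseq n t := by
    have step1 : |∫ t, (φ' t * (if 0 ≤ t then 1 - G t else -G t)
        - φ' t * (if 0 ≤ t then 1 - F t else -F t))|
        ≤ ∫ t, |φ' t * (if 0 ≤ t then 1 - G t else -G t)
          - φ' t * (if 0 ≤ t then 1 - F t else -F t)| := by
      have := norm_integral_le_integral_norm (μ := (volume : Measure ℝ))
        (f := fun t => (φ' t * (if 0 ≤ t then 1 - G t else -G t)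
          - φ' t * (if 0 ≤ t then 1 - F t else -F t)))
      simpa [Real.norm_eq_abs] using this
    have step2 : ∫ t, |φ' t * (if 0 ≤ t then 1 - G t else -G t)
        - φ' t * (if 0 ≤ t then 1 - F t else -F t)| ≤ ∫ t, gseq n t := by
      apply integral_mono_ae ((hintG'.sub hintF').abs) hgnint
      filter_upwards [hne] with t ht
      have heq : φ' t * (if 0 ≤ t then 1 - G t else -G t)
          - φ' t * (if 0 ≤ t then 1 - F t else -F t)
          = φ' t * (F t - G t) := by
        by_cases htt : 0 ≤ t
        · rw [if_pos htt, if_pos htt]; ring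
        · rw [if_neg htt, if_neg htt]; ring
      simp only [Pi.sub_apply]
      rw [heq, abs_mul]
      have h1 : |φ' t| ≤ a * |t| ^ (k - 1) := hφ'bd t ht
      have h2 : |F t - G t| ≤ min (d n t) (W t) := by
        rw [abs_sub_comm]
        apply le_min
        · have e1 := hup t
          have e2 := hlow t
          have e3 := le_abs_self (U n t - F t)
          have e4 := le_abs_self (F t - L n t)
          have e5 := abs_nonneg (U n t - F t)
          have e6 := abs_nonneg (F t - L n t)
          rw [abs_le]
          constructor <;> simp only [hddef] <;> [linarith; linarith]
        · exact claimGF t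
      calc |φ' t| * |F t - G t| ≤ (a * |t| ^ (k - 1)) * min (d n t) (W t) :=
            mul_le_mul h1 h2 (abs_nonneg _)
              (mul_nonneg ha.le (Real.rpow_nonneg (abs_nonneg _) _))
        _ = gseq n t := by simp only [hgdef]; ring
    exact step1.trans step2
  exact habs.trans hIn
end
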